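/- arXiv:2208.01563 — 6 statements merged into one kernel-verified Lean document; each statement's English description precedes it below -/
import Mathlib

section
/- Let A be a finite set of agents, let P1 and P2 be two strict preference profiles on A in which every agent has the same acceptability set in P1 and in P2, let M1 be a perfect matching on A that is stable with respect to P1, and let M2 be a perfect matching on A that is stable with respect to P2. Then the number of pairs {b,c} ∈ M1 such that, with respect to the preferences in P2, agent b strictly prefers M2(b) to c and agent c strictly prefers M2(c) to b is at most the number of agents whose preference lists in P1 and P2 differ. -/
/-- A preference profile: each agent has a finite set of acceptable agents and a
rank function encoding its preference list (lower rank = more preferred). -/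
structure PrefProfile (A : Type*) where
  acc : A → Finset A
  rank : A → A → ℕ

namespace PrefProfile

variable {A : Type*} (P : PrefProfile A)

/-- Agent `a` strictly prefers `b` to `c`. -/
def Prefers (a b c : A) : Prop := P.rank a b < P.rank a c

/-- A lawful SR(-T) profile: no agent accepts itself and acceptability is symmetric. -/
def Lawful : Prop := (∀ a, a ∉ P.acc a) ∧ (∀ a b : A, b ∈ P.acc a → a ∈ P.acc b)

/-- Strict preferences: no ties among acceptable agents. -/
def Strict : Prop := ∀ a : A, ∀ b ∈ P.acc a, ∀ c ∈ P.acc a, P.rank a b = P.rank a c → b = c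

end PrefProfile

/-- A finite set of unordered pairs of agents is a matching if its pairs are
non-diagonal and pairwise disjoint. -/
def IsMatching {A : Type*} (M : Finset (Sym2 A)) : Prop :=
  (∀ p ∈ M, ¬ p.IsDiag) ∧ ∀ a b c : A, s(a, b) ∈ M → s(a, c) ∈ M → b = c

/-- `a` is matched in `M`. -/
def Matched {A : Type*} (M : Finset (Sym2 A)) (a : A) : Prop := ∃ b, s(a, b) ∈ M

/-- A matching is perfect if it matches all agents. -/
def IsPerfect {A : Type*} (M : Finset (Sym2 A)) : Prop := ∀ a, Matched M a

/-- All pairs of `M` consist of mutually acceptable agents w.r.t. `P`. -/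
def Acceptable {A : Type*} (P : PrefProfile A) (M : Finset (Sym2 A)) : Prop :=
  ∀ a b : A, s(a, b) ∈ M → b ∈ P.acc a

/-- The pair `{a, b}` blocks `M` w.r.t. `P`: `a` and `b` accept each other, and each
of them is either unmatched or strictly prefers the other to its partner. -/
def Blocks {A : Type*} (P : PrefProfile A) (M : Finset (Sym2 A)) (a b : A) : Prop :=
  b ∈ P.acc a ∧ a ∈ P.acc b ∧
    (∀ c, s(a, c) ∈ M → P.Prefers a b c) ∧ (∀ c, s(b, c) ∈ M → P.Prefers b a c)

/-- `M` is a (weakly) stable matching for `P`. -/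
def IsStable {A : Type*} (P : PrefProfile A) (M : Finset (Sym2 A)) : Prop :=
  IsMatching M ∧ Acceptable P M ∧ ∀ a b : A, ¬ Blocks P M a b

/-- `a` has the same preference list in `P1` and `P2`: same acceptability set and the
same strict comparisons among acceptable agents. -/
def SamePrefList {A : Type*} (P1 P2 : PrefProfile A) (a : A) : Prop :=
  P1.acc a = P2.acc a ∧
    ∀ b ∈ P1.acc a, ∀ c ∈ P1.acc a, (P1.Prefers a b c ↔ P2.Prefers a b c)

/-- Auxiliary walk alternating `m2` and `m1` steps. -/
private def srWalk {A : Type*} (m1 m2 : A → A) : ℕ → A → A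
  | 0, b => b
  | i + 1, b => if i % 2 = 0 then m2 (srWalk m1 m2 i b) else m1 (srWalk m1 m2 i b)

/-- The number of pairs `{b,c} ∈ M1` such that, w.r.t. `P2`, `b` strictly prefers
`M2(b)` to `c` and `c` strictly prefers `M2(c)` to `b`, is at most the number of
agents whose preference lists in `P1` and `P2` differ. -/
theorem stmt0 {A : Type*} [Fintype A] [DecidableEq A]
    (P1 P2 : PrefProfile A) (hl1 : P1.Lawful) (hl2 : P2.Lawful)
    (hs1 : P1.Strict) (hs2 : P2.Strict)
    (hacc : ∀ a : A, P1.acc a = P2.acc a)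
    (M1 M2 : Finset (Sym2 A))
    (hM1 : IsStable P1 M1) (hperf1 : IsPerfect M1)
    (hM2 : IsStable P2 M2) (hperf2 : IsPerfect M2) :
    {p : Sym2 A | p ∈ M1 ∧ ∀ b c : A, p = s(b, c) →
        ((∀ b', s(b, b') ∈ M2 → P2.Prefers b b' c) ∧
         (∀ c', s(c, c') ∈ M2 → P2.Prefers c c' b))}.ncard
      ≤ {a : A | ¬ SamePrefList P1 P2 a}.ncard := by
  classical
  obtain ⟨⟨hnd1, huq1⟩, haccM1, hstab1⟩ := hM1
  obtain ⟨⟨hnd2, huq2⟩, haccM2, hstab2⟩ := hM2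
  have hperf1' : ∀ a, ∃ b, s(a, b) ∈ M1 := hperf1
  have hperf2' : ∀ a, ∃ b, s(a, b) ∈ M2 := hperf2
  choose m1 hm1 using hperf1'
  choose m2 hm2 using hperf2'
  have uniq1 : ∀ a b, s(a, b) ∈ M1 → b = m1 a := fun a b h => huq1 a b (m1 a) h (hm1 a)
  have uniq2 : ∀ a b, s(a, b) ∈ M2 → b = m2 a := fun a b h => huq2 a b (m2 a) h (hm2 a)
  have hm1' : ∀ a, s(m1 a, a) ∈ M1 := fun a => by rw [Sym2.eq_swap]; exact hm1 a
  have hm2' : ∀ a, s(m2 a, a) ∈ M2 := fun a => by rw [Sym2.eq_swap]; exact hm2 a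
  have inv1 : ∀ a, m1 (m1 a) = a := fun a => (uniq1 (m1 a) a (hm1' a)).symm
  have inv2 : ∀ a, m2 (m2 a) = a := fun a => (uniq2 (m2 a) a (hm2' a)).symm
  have ne1 : ∀ a, m1 a ≠ a := by
    intro a h
    exact hnd1 _ (hm1 a) (Sym2.mk_isDiag_iff.mpr h.symm)
  -- acceptability facts (all phrased w.r.t. P1's acceptability sets)
  have a1 : ∀ a, m1 a ∈ P1.acc a := fun a => haccM1 a (m1 a) (hm1 a)
  have a1' : ∀ a, a ∈ P1.acc (m1 a) := fun a => haccM1 (m1 a) a (hm1' a)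
  have a2 : ∀ a, m2 a ∈ P1.acc a := fun a => by rw [hacc]; exact haccM2 a (m2 a) (hm2 a)
  have a2' : ∀ a, a ∈ P1.acc (m2 a) := fun a => by rw [hacc]; exact haccM2 (m2 a) a (hm2' a)
  -- the two key predicates
  let X : A → Prop := fun a => P2.Prefers a (m2 a) (m1 a)
  let Y : A → Prop := fun a => P1.Prefers a (m1 a) (m2 a)
  have trans12 : ∀ a x y, SamePrefList P1 P2 a → x ∈ P1.acc a → y ∈ P1.acc a →
      P1.Prefers a x y → P2.Prefers a x y := fun a x y h hx hy => (h.2 x hx y hy).mp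
  have trans21 : ∀ a x y, SamePrefList P1 P2 a → x ∈ P1.acc a → y ∈ P1.acc a →
      P2.Prefers a x y → P1.Prefers a x y := fun a x y h hx hy => (h.2 x hx y hy).mpr
  -- one propagation step, using stability of M1 w.r.t. P1
  have step1 : ∀ v, SamePrefList P1 P2 v → X v → Y (m2 v) := by
    intro v hS hX
    have hne : m1 v ≠ m2 v := by
      intro h
      have hX' : P2.rank v (m2 v) < P2.rank v (m1 v) := hX
      rw [h] at hX'
      exact lt_irrefl _ hX'
    have hX1 : P1.Prefers v (m2 v) (m1 v) := trans21 v _ _ hS (a2 v) (a1 v) hX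
    have hnp : ¬ P1.Prefers (m2 v) v (m1 (m2 v)) := by
      intro hP
      apply hstab1 v (m2 v)
      refine ⟨?_, ?_, ?_, ?_⟩
      · exact a2 v
      · exact a2' v
      · intro c hc; rw [uniq1 v c hc]; exact hX1
      · intro c hc; rw [uniq1 (m2 v) c hc]; exact hP
    have hle : P1.rank (m2 v) (m1 (m2 v)) ≤ P1.rank (m2 v) v := not_lt.mp hnp
    have hne2 : P1.rank (m2 v) (m1 (m2 v)) ≠ P1.rank (m2 v) v := by
      intro h
      have h3 := hs1 (m2 v) (m1 (m2 v)) (a1 (m2 v)) v (a2' v) h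
      have h4 := congrArg m1 h3
      rw [inv1] at h4
      exact hne h4.symm
    show P1.Prefers (m2 v) (m1 (m2 v)) (m2 (m2 v))
    rw [show m2 (m2 v) = v from inv2 v]
    exact lt_of_le_of_ne hle hne2
  -- the other propagation step, using stability of M2 w.r.t. P2
  have step2 : ∀ u, SamePrefList P1 P2 u → Y u → X (m1 u) := by
    intro u hS hY
    have hne : m2 u ≠ m1 u := by
      intro h
      have hY' : P1.rank u (m1 u) < P1.rank u (m2 u) := hY
      rw [h] at hY'
      exact lt_irrefl _ hY'
    have hY2 : P2.Prefers u (m1 u) (m2 u) := trans12 u _ _ hS (a1 u) (a2 u) hY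
    have hnp : ¬ P2.Prefers (m1 u) u (m2 (m1 u)) := by
      intro hP
      apply hstab2 u (m1 u)
      refine ⟨?_, ?_, ?_, ?_⟩
      · rw [← hacc]; exact a1 u
      · rw [← hacc]; exact a1' u
      · intro c hc; rw [uniq2 u c hc]; exact hY2
      · intro c hc; rw [uniq2 (m1 u) c hc]; exact hP
    have hle : P2.rank (m1 u) (m2 (m1 u)) ≤ P2.rank (m1 u) u := not_lt.mp hnp
    have hne2 : P2.rank (m1 u) (m2 (m1 u)) ≠ P2.rank (m1 u) u := by
      intro h
      have hacc1 : m2 (m1 u) ∈ P2.acc (m1 u) := haccM2 (m1 u) _ (hm2 (m1 u))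
      have hacc2 : u ∈ P2.acc (m1 u) := by rw [← hacc]; exact a1' u
      have h3 := hs2 (m1 u) (m2 (m1 u)) hacc1 u hacc2 h
      have h4 := congrArg m2 h3
      rw [inv2] at h4
      exact hne h4.symm
    show P2.Prefers (m1 u) (m2 (m1 u)) (m1 (m1 u))
    rw [show m1 (m1 u) = u from inv1 u]
    exact lt_of_le_of_ne hle hne2
  -- the walk
  set w : ℕ → A → A := srWalk m1 m2 with hwdef
  have hw0 : ∀ b, w 0 b = b := fun _ => rfl
  have hwS : ∀ i b, w (i + 1) b = if i % 2 = 0 then m2 (w i b) else m1 (w i b) :=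
    fun _ _ => rfl
  -- forward propagation along the walk
  have prop : ∀ b, X b → ∀ n, (∀ i, i < n → SamePrefList P1 P2 (w i b)) →
      (n % 2 = 0 → X (w n b)) ∧ (n % 2 = 1 → Y (w n b)) := by
    intro b hXb n
    induction n with
    | zero =>
      intro _
      exact ⟨fun _ => hXb, fun h => by omega⟩
    | succ n ih =>
      intro hU
      have ih' := ih (fun i hi => hU i (Nat.lt_succ_of_lt hi))
      have hSn : SamePrefList P1 P2 (w n b) := hU n (Nat.lt_succ_self n)
      rcases Nat.mod_two_eq_zero_or_one n with h | h
      · have hXn := ih'.1 h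
        have he : w (n + 1) b = m2 (w n b) := by rw [hwS, if_pos h]
        constructor
        · intro h'; omega
        · intro _; rw [he]; exact step1 _ hSn hXn
      · have hYn := ih'.2 h
        have he : w (n + 1) b = m1 (w n b) := by rw [hwS, if_neg (by omega)]
        constructor
        · intro _; rw [he]; exact step2 _ hSn hYn
        · intro h'; omega
  -- the walk can be reconstructed backwards
  have back : ∀ b i, w i b = if i % 2 = 0 then m2 (w (i + 1) b) else m1 (w (i + 1) b) := by
    intro b i
    rcases Nat.mod_two_eq_zero_or_one i with h | h
    · rw [if_pos h, hwS, if_pos h, inv2]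
    · rw [if_neg (by omega), hwS, if_neg (by omega), inv1]
  have wback : ∀ b1 b2 n1 n2, n1 ≤ n2 → n1 % 2 = n2 % 2 → w n1 b1 = w n2 b2 →
      ∀ k, k ≤ n1 → w (n1 - k) b1 = w (n2 - k) b2 := by
    intro b1 b2 n1 n2 hle hpar heq k
    induction k with
    | zero => intro _; simpa using heq
    | succ k ih =>
      intro hk
      have hkk := ih (Nat.le_of_succ_le hk)
      have e1 : n1 - k = (n1 - (k + 1)) + 1 := by omega
      have e2 : n2 - k = (n2 - (k + 1)) + 1 := by omega
      have hp : (n1 - (k + 1)) % 2 = (n2 - (k + 1)) % 2 := by omega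
      rw [back b1 (n1 - (k + 1)), back b2 (n2 - (k + 1)), ← e1, ← e2, hkk, hp]
  -- even positions of the walk are iterates of σ = m1 ∘ m2
  have iter : ∀ b i, w (2 * i) b = (fun a => m1 (m2 a))^[i] b := by
    intro b i
    induction i with
    | zero => rfl
    | succ i ih =>
      have e : 2 * (i + 1) = (2 * i + 1) + 1 := by ring
      rw [e, hwS, if_neg (by omega), hwS, if_pos (by omega), ih,
        Function.iterate_succ_apply']
  -- every member of a "bad" pair has a changed agent on its walk
  have exist_changed : ∀ b, X b → X (m1 b) → ∃ i, ¬ SamePrefList P1 P2 (w i b) := by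
    intro b hXb hXmb
    by_contra hall
    push_neg at hall
    have hinj : Function.Injective (fun a => m1 (m2 a)) := by
      intro x y hxy
      have h1 : m1 (m2 x) = m1 (m2 y) := hxy
      have h2 := congrArg m1 h1
      rw [inv1, inv1] at h2
      have h3 := congrArg m2 h2
      rwa [inv2, inv2] at h3
    obtain ⟨i, j, hij, hmap⟩ := Fintype.exists_ne_map_eq_of_card_lt
      (fun i : Fin (Fintype.card A + 1) => (fun a => m1 (m2 a))^[(i : ℕ)] b)
      (by simp)
    -- get k ≥ 1 with σ^[k] b = b
    have hk : ∃ k, 1 ≤ k ∧ (fun a => m1 (m2 a))^[k] b = b := by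
      rcases Ne.lt_or_gt (fun h => hij (Fin.ext h) : (i : ℕ) ≠ (j : ℕ)) with hlt | hlt
      · refine ⟨(j : ℕ) - (i : ℕ), by omega, ?_⟩
        have := hmap.symm
        rw [show (j : ℕ) = (i : ℕ) + ((j : ℕ) - (i : ℕ)) by omega,
          Function.iterate_add_apply] at this
        exact (Function.Injective.iterate hinj (i : ℕ)) this
      · refine ⟨(i : ℕ) - (j : ℕ), by omega, ?_⟩
        have := hmap
        rw [show (i : ℕ) = (j : ℕ) + ((i : ℕ) - (j : ℕ)) by omega,
          Function.iterate_add_apply] at this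
        exact (Function.Injective.iterate hinj (j : ℕ)) this
    obtain ⟨k, hk1, hkb⟩ := hk
    have hclose : w (2 * k) b = b := by rw [iter]; exact hkb
    have hm1b : w (2 * k - 1) b = m1 b := by
      have := back b (2 * k - 1)
      rw [if_neg (by omega), show (2 * k - 1) + 1 = 2 * k by omega, hclose] at this
      exact this
    have hY : Y (m1 b) := by
      rw [← hm1b]
      exact (prop b hXb (2 * k - 1) (fun i _ => hall i)).2 (by omega)
    have hS : SamePrefList P1 P2 (m1 b) := by rw [← hm1b]; exact hall (2 * k - 1)
    have h2 : P2.Prefers (m1 b) (m1 (m1 b)) (m2 (m1 b)) :=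
      trans12 (m1 b) _ _ hS (a1 (m1 b)) (a2 (m1 b)) hY
    rw [inv1] at h2
    have h3 : P2.Prefers (m1 b) (m2 (m1 b)) (m1 (m1 b)) := hXmb
    rw [inv1] at h3
    exact absurd h3 (Nat.lt_asymm h2)
  -- the first changed agent on the walk from b
  let N : A → ℕ := fun b =>
    if h : ∃ i, ¬ SamePrefList P1 P2 (w i b) then Nat.find h else 0
  let F : A → A := fun b => w (N b) b
  let Efin : Finset A := Finset.univ.filter (fun a => X a ∧ X (m1 a))
  let Chg : Finset A := Finset.univ.filter (fun a => ¬ SamePrefList P1 P2 a)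
  have hEmem : ∀ a, a ∈ Efin ↔ (X a ∧ X (m1 a)) := by
    intro a
    simp only [Efin, Finset.mem_filter, Finset.mem_univ, true_and]
  have hEx : ∀ b ∈ Efin, ∃ i, ¬ SamePrefList P1 P2 (w i b) := by
    intro b hb
    obtain ⟨h1, h2⟩ := (hEmem b).mp hb
    exact exist_changed b h1 h2
  have hNspec : ∀ b ∈ Efin, ¬ SamePrefList P1 P2 (w (N b) b) := by
    intro b hb
    have h := hEx b hb
    simp only [N, dif_pos h]
    exact Nat.find_spec h
  have hNmin : ∀ b ∈ Efin, ∀ i, i < N b → SamePrefList P1 P2 (w i b) := by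
    intro b hb i hi
    have h := hEx b hb
    simp only [N, dif_pos h] at hi
    exact not_not.mp (Nat.find_min h hi)
  have hmaps : ∀ b ∈ Efin, F b ∈ Chg := by
    intro b hb
    simp only [Chg, Finset.mem_filter, Finset.mem_univ, true_and]
    exact hNspec b hb
  -- two walk-endpoints with the same parity and the same first changed agent coincide
  have key : ∀ b1 ∈ Efin, ∀ b2 ∈ Efin, N b1 ≤ N b2 → F b1 = F b2 →
      N b1 % 2 = N b2 % 2 → b1 = b2 := by
    intro b1 hb1 b2 hb2 h12 hFF hpar
    have heq : w (N b1) b1 = w (N b2) b2 := hFF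
    have hb1eq : b1 = w (N b2 - N b1) b2 := by
      have := wback b1 b2 (N b1) (N b2) h12 hpar heq (N b1) le_rfl
      rw [Nat.sub_self, hw0] at this
      exact this
    rcases eq_or_lt_of_le h12 with heqn | hlt
    · rw [hb1eq, ← heqn, Nat.sub_self, hw0]
    · exfalso
      set d := N b2 - N b1 with hd
      have hde : d % 2 = 0 := by omega
      have hd2 : 2 ≤ d := by omega
      have hj1 : (d - 1) % 2 = 1 := by omega
      have hjlt : d - 1 < N b2 := by omega
      obtain ⟨hX2, _⟩ := (hEmem b2).mp hb2
      have hYj : Y (w (d - 1) b2) :=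
        (prop b2 hX2 (d - 1) (fun i hi => hNmin b2 hb2 i (by omega))).2 hj1
      have hwj : w (d - 1) b2 = m1 b1 := by
        have := back b2 (d - 1)
        rw [if_neg (by omega), show (d - 1) + 1 = d by omega, ← hb1eq] at this
        exact this
      rw [hwj] at hYj
      have hSj : SamePrefList P1 P2 (m1 b1) := by
        rw [← hwj]
        exact hNmin b2 hb2 (d - 1) hjlt
      obtain ⟨_, hXm1⟩ := (hEmem b1).mp hb1
      have h2 : P2.Prefers (m1 b1) (m1 (m1 b1)) (m2 (m1 b1)) :=
        trans12 (m1 b1) _ _ hSj (a1 (m1 b1)) (a2 (m1 b1)) hYj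
      rw [inv1] at h2
      have h3 : P2.Prefers (m1 b1) (m2 (m1 b1)) (m1 (m1 b1)) := hXm1
      rw [inv1] at h3
      exact absurd h3 (Nat.lt_asymm h2)
  -- fibers of F on Efin have at most two elements
  have hfib : ∀ x ∈ Chg, (Efin.filter (fun b => F b = x)).card ≤ 2 := by
    intro x _
    have h : (Efin.filter (fun b => F b = x)).card ≤ (Finset.range 2).card := by
      apply Finset.card_le_card_of_injOn (fun b => N b % 2)
      · intro a _
        exact Finset.mem_range.mpr (Nat.mod_lt _ (by norm_num))
      · intro c1 h1 c2 h2 hpar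
        simp only [Finset.mem_coe, Finset.mem_filter] at h1 h2
        rcases le_total (N c1) (N c2) with hle | hle
        · exact key c1 h1.1 c2 h2.1 hle (h1.2.trans h2.2.symm) hpar
        · exact (key c2 h2.1 c1 h1.1 hle (h2.2.trans h1.2.symm) hpar.symm).symm
    simpa using h
  have hE_le : Efin.card ≤ 2 * Chg.card :=
    Finset.card_le_mul_card_image_of_maps_to hmaps 2 hfib
  -- the bad pairs, as the image of Efin
  let Badfin : Finset (Sym2 A) := Efin.image (fun a => s(a, m1 a))
  have h2bad : 2 * Badfin.card ≤ Efin.card := by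
    apply Finset.mul_card_image_le_card Efin 2
    intro p hp
    obtain ⟨a, ha, rfl⟩ := Finset.mem_image.mp hp
    have hsub : ({a, m1 a} : Finset A) ⊆
        Efin.filter (fun b => s(b, m1 b) = s(a, m1 a)) := by
      intro x hx
      rcases Finset.mem_insert.mp hx with rfl | hx
      · exact Finset.mem_filter.mpr ⟨ha, rfl⟩
      · rw [Finset.mem_singleton] at hx
        subst hx
        refine Finset.mem_filter.mpr ⟨?_, ?_⟩
        · obtain ⟨h1, h2⟩ := (hEmem a).mp ha
          refine (hEmem (m1 a)).mpr ⟨h2, ?_⟩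
          rw [inv1]; exact h1
        · rw [inv1, Sym2.eq_swap]
    calc 2 = ({a, m1 a} : Finset A).card := (Finset.card_pair (ne1 a).symm).symm
      _ ≤ _ := Finset.card_le_card hsub
  -- identify the two sets of the statement
  have hbadset : {p : Sym2 A | p ∈ M1 ∧ ∀ b c : A, p = s(b, c) →
      ((∀ b', s(b, b') ∈ M2 → P2.Prefers b b' c) ∧
       (∀ c', s(c, c') ∈ M2 → P2.Prefers c c' b))} = ↑Badfin := by
    ext p
    induction p using Sym2.ind with
    | _ x y =>
      simp only [Set.mem_setOf_eq, Finset.mem_coe, Badfin, Finset.mem_image]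
      constructor
      · rintro ⟨hpM, hcond⟩
        have hy : y = m1 x := uniq1 x y hpM
        subst hy
        obtain ⟨hc1, hc2⟩ := hcond x (m1 x) rfl
        have hX1 : X x := hc1 (m2 x) (hm2 x)
        have hX2 : X (m1 x) := by
          have := hc2 (m2 (m1 x)) (hm2 (m1 x))
          show P2.Prefers (m1 x) (m2 (m1 x)) (m1 (m1 x))
          rw [inv1]
          exact this
        exact ⟨x, (hEmem x).mpr ⟨hX1, hX2⟩, rfl⟩
      · rintro ⟨a, ha, heq⟩
        obtain ⟨hXa, hXma⟩ := (hEmem a).mp ha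
        have hXa' : P2.Prefers a (m2 a) (m1 a) := hXa
        have hXma' : P2.Prefers (m1 a) (m2 (m1 a)) a := by
          have : P2.Prefers (m1 a) (m2 (m1 a)) (m1 (m1 a)) := hXma
          rwa [inv1] at this
        constructor
        · rw [← heq]; exact hm1 a
        · intro b c hbc
          have hbc' : s(a, m1 a) = s(b, c) := heq ▸ hbc
          rcases Sym2.eq_iff.mp hbc' with ⟨rfl, rfl⟩ | ⟨rfl, rfl⟩
          · constructor
            · intro b' hb'; rw [uniq2 a b' hb']; exact hXa'
            · intro c' hc'; rw [uniq2 (m1 a) c' hc']; exact hXma'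
          · constructor
            · intro b' hb'; rw [uniq2 (m1 a) b' hb']; exact hXma'
            · intro c' hc'; rw [uniq2 a c' hc']; exact hXa'
  have hchgset : {a : A | ¬ SamePrefList P1 P2 a} = ↑Chg := by
    ext a
    simp only [Set.mem_setOf_eq, Chg, Finset.coe_filter, Finset.mem_univ, true_and]
  rw [hbadset, hchgset, Set.ncard_coe_finset, Set.ncard_coe_finset]
  omega
end

section
/- Let (A, P) be an SR instance in which the preference list of every agent is derived from one common strict master list over A. Then (A, P) has exactly one stable matching. -/
/-- Stability relativized to a set `S` of remaining agents. -/
def Stab {A : Type*} (P : PrefProfile A) (S : Finset A) (M : Finset (Sym2 A)) : Prop :=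
  IsMatching M ∧ (∀ a b : A, s(a, b) ∈ M → a ∈ S ∧ b ∈ P.acc a) ∧
    ∀ a ∈ S, ∀ b ∈ S,
      ¬(b ∈ P.acc a ∧ (∀ c, s(a, c) ∈ M → P.Prefers a b c) ∧
        (∀ c, s(b, c) ∈ M → P.Prefers b a c))

theorem stab_exists_unique {A : Type*} [DecidableEq A]
    (P : PrefProfile A) (hl : P.Lawful)
    (ml : A → ℕ) (hml : Function.Injective ml)
    (hderived : ∀ a : A, ∀ b ∈ P.acc a, ∀ c ∈ P.acc a, (P.Prefers a b c ↔ ml b < ml c))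
    (S : Finset A) : ∃! M : Finset (Sym2 A), Stab P S M := by
  classical
  induction S using Finset.strongInduction with
  | _ S ih =>
  by_cases hTe : ∀ a ∈ S, ∀ b ∈ S, b ∉ P.acc a
  · -- no mutually acceptable pair left: empty matching
    refine ⟨∅, ⟨⟨fun p hp => absurd hp (by simp), fun a b c h => absurd h (by simp)⟩,
      fun a b h => absurd h (by simp), fun a ha b hb hbl => hTe a ha b hb hbl.1⟩, ?_⟩
    intro M hM
    by_contra hne
    obtain ⟨p, hp⟩ := Finset.nonempty_iff_ne_empty.mpr hne
    obtain ⟨⟨a, b⟩, rfl⟩ := p.exists_rep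
    have hp2 : s(a, b) ∈ M := hp
    have h1 := hM.2.1 a b hp2
    have hp' : s(b, a) ∈ M := by rw [Sym2.eq_swap]; exact hp2
    have h2 := hM.2.1 b a hp'
    exact hTe a h1.1 b h2.1 h1.2
  · push_neg at hTe
    -- T : agents in S that have an acceptable partner in S
    set T : Finset A := S.filter (fun a => ∃ b ∈ S, b ∈ P.acc a) with hTdef
    have hTne : T.Nonempty := by
      obtain ⟨a, ha, b, hb, hab⟩ := hTe
      exact ⟨a, by simp [hTdef, ha]; exact ⟨b, hb, hab⟩⟩
    obtain ⟨x, hxT, hxmin⟩ := T.exists_min_image ml hTne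
    have hxS : x ∈ S := (Finset.mem_filter.mp hxT).1
    have hBne : ((P.acc x) ∩ S).Nonempty := by
      obtain ⟨b, hb, hab⟩ := (Finset.mem_filter.mp hxT).2
      exact ⟨b, Finset.mem_inter.mpr ⟨hab, hb⟩⟩
    obtain ⟨y, hyB, hymin⟩ := ((P.acc x) ∩ S).exists_min_image ml hBne
    have hyacc : y ∈ P.acc x := (Finset.mem_inter.mp hyB).1
    have hyS : y ∈ S := (Finset.mem_inter.mp hyB).2
    have hxacc : x ∈ P.acc y := hl.2 x y hyacc
    have hxy : x ≠ y := fun h => hl.1 x (h ▸ hyacc)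
    -- membership of T from having an acceptable partner in S
    have memT : ∀ c ∈ S, ∀ d ∈ S, d ∈ P.acc c → c ∈ T := fun c hc d hd hcd =>
      Finset.mem_filter.mpr ⟨hc, d, hd, hcd⟩
    -- Claim A: every S-stable matching contains s(x, y)
    have claimA : ∀ M : Finset (Sym2 A), Stab P S M → s(x, y) ∈ M := by
      intro M hM
      by_contra hxyM
      refine hM.2.2 x hxS y hyS ⟨hyacc, ?_, ?_⟩
      · intro c hc
        have h1 := hM.2.1 x c hc
        have h2 := hM.2.1 c x (by rwa [Sym2.eq_swap] at hc)
        have hcB : c ∈ P.acc x ∩ S := Finset.mem_inter.mpr ⟨h1.2, h2.1⟩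
        have hcy : c ≠ y := fun h => hxyM (h ▸ hc)
        have := hymin c hcB
        exact (hderived x y hyacc c h1.2).mpr
          (lt_of_le_of_ne this (fun h => hcy (hml h).symm))
      · intro c hc
        have h1 := hM.2.1 y c hc
        have h2 := hM.2.1 c y (by rwa [Sym2.eq_swap] at hc)
        have hcT : c ∈ T := memT c h2.1 y hyS (hl.2 y c h1.2)
        have hcx : c ≠ x := fun h => hxyM (by rwa [h, Sym2.eq_swap] at hc)
        have := hxmin c hcT
        exact (hderived y x hxacc c h1.2).mpr
          (lt_of_le_of_ne this (fun h => hcx (hml h).symm))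
    set S' : Finset A := S \ {x, y} with hS'def
    have hS'sub : S' ⊆ S := Finset.sdiff_subset
    have hxS' : x ∉ S' := by simp [hS'def]
    have hyS' : y ∉ S' := by simp [hS'def]
    have hmemS' : ∀ a ∈ S, a ≠ x → a ≠ y → a ∈ S' := by
      intro a ha h1 h2; simp [hS'def, ha, h1, h2]
    have noPy : ∀ b ∈ S, b ∈ P.acc x → ¬ P.Prefers x b y := by
      intro b hb hbacc hp
      have h1 := (hderived x b hbacc y hyacc).mp hp
      have h2 := hymin b (Finset.mem_inter.mpr ⟨hbacc, hb⟩)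
      omega
    have noPx : ∀ b ∈ S, b ∈ P.acc y → ¬ P.Prefers y b x := by
      intro b hb hbacc hp
      have h1 := (hderived y b hbacc x hxacc).mp hp
      have h2 := hxmin b (memT b hb y hyS (hl.2 y b hbacc))
      omega
    obtain ⟨M', hM', huniq'⟩ := ih S' (Finset.ssubset_iff_of_subset hS'sub |>.mpr ⟨x, hxS, hxS'⟩)
    -- pairs of M' avoid x and y
    have havoid : ∀ a b : A, s(a, b) ∈ M' → a ≠ x ∧ a ≠ y := by
      intro a b hab
      have := (hM'.2.1 a b hab).1
      rw [hS'def, Finset.mem_sdiff] at this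
      simp at this
      exact ⟨this.2.1, this.2.2⟩
    -- the candidate stable matching
    set M₀ : Finset (Sym2 A) := insert s(x, y) M' with hM₀def
    have hstab₀ : Stab P S M₀ := by
      refine ⟨⟨?_, ?_⟩, ?_, ?_⟩
      · intro p hp
        rcases Finset.mem_insert.mp hp with h | h
        · subst h; simpa using hxy
        · exact hM'.1.1 p h
      · intro a b c hab hac
        rcases Finset.mem_insert.mp hab with h1 | h1 <;>
          rcases Finset.mem_insert.mp hac with h2 | h2
        · rw [Sym2.eq_iff] at h1 h2
          rcases h1 with ⟨h3, h4⟩ | ⟨h3, h4⟩ <;> rcases h2 with ⟨h5, h6⟩ | ⟨h5, h6⟩ <;>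
            first
              | exact h4.trans h6.symm
              | exact absurd (h3.symm.trans h5) hxy
              | exact absurd (h3.symm.trans h5) (Ne.symm hxy)
        · exfalso
          rw [Sym2.eq_iff] at h1
          rcases h1 with ⟨h3, h4⟩ | ⟨h3, h4⟩
          · exact (havoid a c h2).1 h3
          · exact (havoid a c h2).2 h3
        · exfalso
          rw [Sym2.eq_iff] at h2
          rcases h2 with ⟨h3, h4⟩ | ⟨h3, h4⟩
          · exact (havoid a b h1).1 h3
          · exact (havoid a b h1).2 h3
        · exact hM'.1.2 a b c h1 h2
      · intro a b hab
        rcases Finset.mem_insert.mp hab with h | h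
        · rw [Sym2.eq_iff] at h
          rcases h with ⟨h3, h4⟩ | ⟨h3, h4⟩
          · rw [h3, h4]; exact ⟨hxS, hyacc⟩
          · rw [h3, h4]; exact ⟨hyS, hxacc⟩
        · exact ⟨hS'sub (hM'.2.1 a b h).1, (hM'.2.1 a b h).2⟩
      · rintro a ha b hb ⟨hacc, hpa, hpb⟩
        have hxyM₀ : s(x, y) ∈ M₀ := Finset.mem_insert_self _ _
        have hyxM₀ : s(y, x) ∈ M₀ := by rwa [Sym2.eq_swap]
        have haccb : a ∈ P.acc b := hl.2 a b hacc
        have hax : a ≠ x := by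
          intro h; rw [h] at hacc hpa; exact noPy b hb hacc (hpa y hxyM₀)
        have hay : a ≠ y := by
          intro h; rw [h] at hacc hpa; exact noPx b hb hacc (hpa x hyxM₀)
        have hbx : b ≠ x := by
          intro h; rw [h] at haccb hpb; exact noPy a ha haccb (hpb y hxyM₀)
        have hby : b ≠ y := by
          intro h; rw [h] at haccb hpb; exact noPx a ha haccb (hpb x hyxM₀)
        exact hM'.2.2 a (hmemS' a ha hax hay) b (hmemS' b hb hbx hby)
          ⟨hacc, fun c hc => hpa c (Finset.mem_insert_of_mem hc),
            fun c hc => hpb c (Finset.mem_insert_of_mem hc)⟩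
    refine ⟨M₀, hstab₀, ?_⟩
    intro M hM
    have hxyM : s(x, y) ∈ M := claimA M hM
    have herase : Stab P S' (M.erase s(x, y)) := by
      refine ⟨⟨fun p hp => hM.1.1 p (Finset.erase_subset _ _ hp),
        fun a b c h1 h2 => hM.1.2 a b c (Finset.erase_subset _ _ h1)
          (Finset.erase_subset _ _ h2)⟩, ?_, ?_⟩
      · intro a b hab
        have habM : s(a, b) ∈ M := Finset.erase_subset _ _ hab
        have h1 := hM.2.1 a b habM
        have hax : a ≠ x := by
          intro h
          rw [h] at habM hab
          have hby : b = y := hM.1.2 x b y habM hxyM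
          rw [hby] at hab
          exact (Finset.notMem_erase _ _) hab
        have hay : a ≠ y := by
          intro h
          rw [h] at habM hab
          have hyxM : s(y, x) ∈ M := by rw [Sym2.eq_swap]; exact hxyM
          have hbx : b = x := hM.1.2 y b x habM hyxM
          rw [hbx, Sym2.eq_swap] at hab
          exact (Finset.notMem_erase _ _) hab
        exact ⟨hmemS' a h1.1 hax hay, h1.2⟩
      · rintro a ha b hb ⟨hacc, hpa, hpb⟩
        have haS := hS'sub ha
        have hbS := hS'sub hb
        refine hM.2.2 a haS b hbS ⟨hacc, ?_, ?_⟩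
        · intro c hc
          refine hpa c (Finset.mem_erase.mpr ⟨?_, hc⟩)
          intro h
          rw [Sym2.eq_iff] at h
          rcases h with ⟨h3, h4⟩ | ⟨h3, h4⟩
          · exact hxS' (h3 ▸ ha)
          · exact hyS' (h3 ▸ ha)
        · intro c hc
          refine hpb c (Finset.mem_erase.mpr ⟨?_, hc⟩)
          intro h
          rw [Sym2.eq_iff] at h
          rcases h with ⟨h3, h4⟩ | ⟨h3, h4⟩
          · exact hxS' (h3 ▸ hb)
          · exact hyS' (h3 ▸ hb)
    have : M.erase s(x, y) = M' := huniq' _ herase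
    rw [hM₀def, ← this, Finset.insert_erase hxyM]

/-- If the preference list of every agent of an SR instance is derived from one common
strict master list (encoded by an injective rank function `ml`), then the instance has
exactly one stable matching. -/
theorem stmt1 {A : Type*} [Fintype A] [DecidableEq A]
    (P : PrefProfile A) (hl : P.Lawful)
    (ml : A → ℕ) (hml : Function.Injective ml)
    (hderived : ∀ a : A, ∀ b ∈ P.acc a, ∀ c ∈ P.acc a, (P.Prefers a b c ↔ ml b < ml c)) :
    ∃! M : Finset (Sym2 A), IsStable P M := by
  classical
  have key := stab_exists_unique P hl ml hml hderived Finset.univ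
  have equiv : ∀ M : Finset (Sym2 A), IsStable P M ↔ Stab P Finset.univ M := by
    intro M
    constructor
    · rintro ⟨hm, hacc, hnb⟩
      refine ⟨hm, fun a b h => ⟨Finset.mem_univ a, hacc a b h⟩, ?_⟩
      rintro a - b - ⟨h1, h2, h3⟩
      exact hnb a b ⟨h1, hl.2 a b h1, h2, h3⟩
    · rintro ⟨hm, hp, hs⟩
      refine ⟨hm, fun a b h => (hp a b h).2, ?_⟩
      rintro a b ⟨h1, -, h2, h3⟩
      exact hs a (Finset.mem_univ a) b (Finset.mem_univ b) ⟨h1, h2, h3⟩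
  obtain ⟨M, hM, hu⟩ := key
  exact ⟨M, (equiv M).mpr hM, fun N hN => hu N ((equiv N).mp hN)⟩
end

section
/- Let (A, P) be an SR-T instance in which every agent has complete preferences derived from one common weak master list over A, and let A_1, …, A_q be the indifference classes of the master list, ordered from most preferred to least preferred. Then every weakly stable matching M satisfies: (1) every pair of M consists of two agents from the same indifference class or from two consecutive indifference classes A_{i−1} and A_i; (2) for every i ∈ {2, …, q}, the number of pairs of M with one agent in A_{i−1} and one agent in A_i equals 1 if |A_1| + … + |A_{i−1}| is odd, and equals 0 if it is even; (3) M leaves no agent unmatched if |A| is even, and leaves exactly one agent unmatched if |A| is odd, in which case the unmatched agent belongs to A_q. -/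
section Helpers

lemma even_card_of_invol {α : Type*} [DecidableEq α] (s : Finset α) (f : α → α)
    (hmem : ∀ x ∈ s, f x ∈ s) (hff : ∀ x ∈ s, f (f x) = x)
    (hne : ∀ x ∈ s, f x ≠ x) : Even s.card := by
  induction s using Finset.strongInduction with
  | _ s ih =>
    rcases s.eq_empty_or_nonempty with rfl | ⟨x, hx⟩
    · simp
    · have hfx : f x ∈ s := hmem x hx
      have hxfx : f x ≠ x := hne x hx
      set t := (s.erase x).erase (f x) with ht
      have htsub : t ⊆ s := fun y hy => Finset.mem_of_mem_erase (Finset.mem_of_mem_erase hy)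
      have htss : t ⊂ s := Finset.ssubset_of_subset_of_ssubset
        (Finset.erase_subset _ _) (Finset.erase_ssubset hx)
      have hcard : t.card + 2 = s.card := by
        rw [ht, Finset.card_erase_of_mem, Finset.card_erase_of_mem hx]
        · have : 2 ≤ s.card := Finset.one_lt_card.mpr ⟨x, hx, f x, hfx, (hne x hx).symm⟩
          omega
        · exact Finset.mem_erase.mpr ⟨hxfx, hfx⟩
      have heven : Even t.card := by
        refine ih t htss (fun y hy => ?_) (fun y hy => hff y (htsub hy))
          (fun y hy => hne y (htsub hy))
        have hys := htsub hy
        have h1 : f y ≠ f x := fun h => by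
          have h' : f (f y) = f (f x) := by rw [h]
          rw [hff y hys, hff x hx] at h'
          exact (Finset.mem_erase.mp (Finset.mem_erase.mp hy).2).1 h'
        have h2 : f y ≠ x := fun h => by
          have h' : f (f y) = f x := by rw [h]
          rw [hff y hys] at h'
          exact (Finset.mem_erase.mp hy).1 h'
        exact Finset.mem_erase.mpr ⟨h1, Finset.mem_erase.mpr ⟨h2, hmem y hys⟩⟩
      rcases heven with ⟨k, hk⟩
      exact ⟨k + 1, by omega⟩

end Helpers

/-- Structure of weakly stable matchings when all agents have complete preferences
derived from one common weak master list with indifference classes `A_1, …, A_q`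
(encoded by a surjective class function `ml : A → Fin q`, class `i` (0-based) being
preferred to class `j` iff `i < j`; 1-based class `A_i` is `{a | (ml a : ℕ) = i - 1}`). -/
theorem stmt2 {A : Type*} [Fintype A] [DecidableEq A] (q : ℕ)
    (P : PrefProfile A) (hl : P.Lawful)
    (ml : A → Fin q) (hsurj : Function.Surjective ml)
    (hcomplete : ∀ a b : A, b ∈ P.acc a ↔ b ≠ a)
    (hderived : ∀ a b c : A, b ≠ a → c ≠ a → (P.Prefers a b c ↔ (ml b : ℕ) < (ml c : ℕ)))
    (M : Finset (Sym2 A)) (hM : IsStable P M) :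
    -- (1) every pair joins two agents of the same or of consecutive indifference classes
    (∀ a b : A, s(a, b) ∈ M →
        ml a = ml b ∨ (ml a : ℕ) + 1 = (ml b : ℕ) ∨ (ml b : ℕ) + 1 = (ml a : ℕ)) ∧
    -- (2) the number of pairs crossing the boundary between the (0-based) classes
    -- `j-1` and `j` is 1 if the number of agents in classes `0, …, j-1` is odd, else 0
    (∀ j : ℕ, 0 < j → j < q →
        (Odd ({a : A | (ml a : ℕ) < j}.ncard) →
          {p : Sym2 A | p ∈ M ∧ ∃ a b : A, p = s(a, b) ∧
              (ml a : ℕ) + 1 = j ∧ (ml b : ℕ) = j}.ncard = 1) ∧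
        (Even ({a : A | (ml a : ℕ) < j}.ncard) →
          {p : Sym2 A | p ∈ M ∧ ∃ a b : A, p = s(a, b) ∧
              (ml a : ℕ) + 1 = j ∧ (ml b : ℕ) = j}.ncard = 0)) ∧
    -- (3) nobody is unmatched if `|A|` is even; exactly one agent, from the last
    -- indifference class, is unmatched if `|A|` is odd
    ((Even (Fintype.card A) → IsPerfect M) ∧
     (Odd (Fintype.card A) → ∃ a : A, ¬ Matched M a ∧ (ml a : ℕ) = q - 1 ∧
        ∀ b : A, ¬ Matched M b → b = a)) := by
  classical
  obtain ⟨⟨hnd, huniq⟩, hacc, hstab⟩ := hM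
  -- basic facts
  have hsymm : ∀ a b : A, s(a, b) ∈ M → s(b, a) ∈ M := by
    intro a b h; rwa [Sym2.eq_swap] at h
  have hne : ∀ a b : A, s(a, b) ∈ M → a ≠ b := by
    intro a b h hab
    exact hnd _ h (by rw [hab]; exact Sym2.mk_isDiag_iff.mpr rfl)
  -- partner function
  have hpf' : ∀ a : A, ∃ b : A, Matched M a → s(a, b) ∈ M := by
    intro a
    by_cases h : Matched M a
    · obtain ⟨b, hb⟩ := h; exact ⟨b, fun _ => hb⟩
    · exact ⟨a, fun h' => absurd h' h⟩
  choose pf hpf using hpf'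
  have hpf_eq : ∀ a b : A, s(a, b) ∈ M → pf a = b := by
    intro a b h
    exact huniq a (pf a) b (hpf a ⟨b, h⟩) h
  -- key stability consequence
  have key : ∀ a b : A, a ≠ b →
      (∃ c, s(a, c) ∈ M ∧ (ml c : ℕ) ≤ (ml b : ℕ)) ∨
      (∃ c, s(b, c) ∈ M ∧ (ml c : ℕ) ≤ (ml a : ℕ)) := by
    intro a b hab
    by_contra h
    push_neg at h
    obtain ⟨h1, h2⟩ := h
    refine hstab a b ⟨(hcomplete a b).mpr hab.symm, (hcomplete b a).mpr hab, ?_, ?_⟩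
    · intro c hc
      exact (hderived a b c hab.symm (hne a c hc).symm).mpr
        (h1 c hc)
    · intro c hc
      exact (hderived b a c hab (hne b c hc).symm).mpr
        (h2 c hc)
  -- at most one unmatched agent
  have huu : ∀ a b : A, ¬ Matched M a → ¬ Matched M b → a = b := by
    intro a b ha hb
    by_contra hab
    rcases key a b hab with ⟨c, hc, _⟩ | ⟨c, hc, _⟩
    · exact ha ⟨c, hc⟩
    · exact hb ⟨c, hc⟩
  -- every matched agent is below any unmatched agent
  have hmatched_le : ∀ a : A, ¬ Matched M a → ∀ c : A, Matched M c → (ml c : ℕ) ≤ (ml a : ℕ) := by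
    intro a ha c hc
    obtain ⟨d, hcd⟩ := hc
    have hdc : s(d, c) ∈ M := hsymm c d hcd
    have had : a ≠ d := fun h => ha ⟨c, h ▸ hdc⟩
    rcases key a d had with ⟨e, he, _⟩ | ⟨e, he, hle⟩
    · exact absurd ⟨e, he⟩ ha
    · rwa [huniq d e c he hdc] at hle
  -- class of an unmatched agent is q-1
  have hunm_class : ∀ a : A, ¬ Matched M a → (ml a : ℕ) = q - 1 := by
    intro a ha
    have hq : 0 < q := (ml a).pos
    obtain ⟨x, hx⟩ := hsurj ⟨q - 1, by omega⟩
    have hxv : (ml x : ℕ) = q - 1 := by rw [hx]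
    by_cases hm : Matched M x
    · have h1 := hmatched_le a ha x hm
      have h2 : (ml a : ℕ) < q := (ml a).2
      omega
    · rw [← huu a x ha hm] at hxv; exact hxv
  -- part (1) auxiliary: no pair spans more than one class boundary
  have aux1 : ∀ a b : A, s(a, b) ∈ M → (ml a : ℕ) + 2 ≤ (ml b : ℕ) → False := by
    intro a b hab hlt
    set S : Finset A := Finset.univ.filter (fun x => (ml x : ℕ) ≤ (ml a : ℕ)) with hS
    have hbq : (ml b : ℕ) < q := (ml b).2
    obtain ⟨c0, hc0⟩ := hsurj ⟨(ml a : ℕ) + 1, by omega⟩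
    have hc0v : (ml c0 : ℕ) = (ml a : ℕ) + 1 := by rw [hc0]
    have hc0S : c0 ∉ S := by
      simp only [hS, Finset.mem_filter, Finset.mem_univ, true_and]; omega
    set T : Finset A := insert c0 (S.erase a) with hT
    have hmemT : ∀ x ∈ T, s(x, pf x) ∈ M ∧ pf x ∈ S := by
      intro x hx
      have hxa : x ≠ a := by
        rcases Finset.mem_insert.mp hx with rfl | hx'
        · intro h; rw [h] at hc0v; omega
        · exact (Finset.mem_erase.mp hx').1
      have hxlt : (ml x : ℕ) < (ml b : ℕ) := by
        rcases Finset.mem_insert.mp hx with rfl | hx'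
        · omega
        · have := (Finset.mem_filter.mp (Finset.mem_of_mem_erase hx')).2
          omega
      rcases key a x (Ne.symm hxa) with ⟨e, he, hle⟩ | ⟨e, he, hle⟩
      · rw [huniq a e b he hab] at hle; omega
      · have hpe : pf x = e := hpf_eq x e he
        constructor
        · rw [hpe]; exact he
        · rw [hpe]
          simp only [hS, Finset.mem_filter, Finset.mem_univ, true_and]; exact hle
    have haS : a ∈ S := by
      simp only [hS, Finset.mem_filter, Finset.mem_univ, true_and]
      exact le_refl _
    have hScard : 0 < S.card := Finset.card_pos.mpr ⟨a, haS⟩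
    have hcardT : T.card = S.card := by
      rw [hT, Finset.card_insert_of_notMem (fun h => hc0S (Finset.mem_of_mem_erase h)),
        Finset.card_erase_of_mem haS]
      omega
    have hinj : Set.InjOn pf T := by
      intro x hx y hy hxy
      have h1 := (hmemT x hx).1
      have h2 := (hmemT y hy).1
      rw [hxy] at h1
      exact huniq (pf y) x y (hsymm x (pf y) h1) (hsymm y (pf y) h2)
    have himg : T.image pf ⊆ S := by
      intro z hz
      obtain ⟨x, hx, rfl⟩ := Finset.mem_image.mp hz
      exact (hmemT x hx).2
    have heq : T.image pf = S := by
      refine Finset.eq_of_subset_of_card_le himg ?_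
      rw [Finset.card_image_of_injOn hinj, hcardT]
    have haimg : a ∈ T.image pf := heq ▸ haS
    obtain ⟨x, hx, hxa⟩ := Finset.mem_image.mp haimg
    have hxaM : s(a, x) ∈ M := hsymm x a (hxa ▸ (hmemT x hx).1)
    have hxb : x = b := huniq a x b hxaM hab
    subst hxb
    rcases Finset.mem_insert.mp hx with h | h
    · rw [← h] at hc0v; omega
    · have := (Finset.mem_filter.mp (Finset.mem_of_mem_erase h)).2
      omega
  have part1 : ∀ a b : A, s(a, b) ∈ M →
      ml a = ml b ∨ (ml a : ℕ) + 1 = (ml b : ℕ) ∨ (ml b : ℕ) + 1 = (ml a : ℕ) := by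
    intro a b hab
    rcases lt_trichotomy ((ml a : ℕ)) ((ml b : ℕ)) with h | h | h
    · right; left
      by_contra h2
      exact aux1 a b hab (by omega)
    · left; exact Fin.val_injective h
    · right; right
      by_contra h2
      exact aux1 b a (hsymm a b hab) (by omega)
  refine ⟨part1, ?_, ?_⟩
  · -- part (2)
    intro j hj0 hjq
    set S : Finset A := Finset.univ.filter (fun x => (ml x : ℕ) < j) with hS
    have hSm : ∀ x ∈ S, Matched M x := by
      intro x hx
      by_contra hm
      have := hunm_class x hm
      have := (Finset.mem_filter.mp hx).2
      omega
    set Sin : Finset A := S.filter (fun x => (ml (pf x) : ℕ) < j) with hSin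
    set Sout : Finset A := S.filter (fun x => ¬ (ml (pf x) : ℕ) < j) with hSout
    have hsplit : Sin.card + Sout.card = S.card :=
      Finset.card_filter_add_card_filter_not _
    have houtle : Sout.card ≤ 1 := by
      refine Finset.card_le_one.mpr ?_
      intro x hx y hy
      by_contra hxy
      obtain ⟨hxS, hxout⟩ := Finset.mem_filter.mp hx
      obtain ⟨hyS, hyout⟩ := Finset.mem_filter.mp hy
      have hxj := (Finset.mem_filter.mp hxS).2
      have hyj := (Finset.mem_filter.mp hyS).2
      rcases key x y hxy with ⟨e, he, hle⟩ | ⟨e, he, hle⟩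
      · rw [hpf_eq x e he] at hxout; omega
      · rw [hpf_eq y e he] at hyout; omega
    have hinEven : Even Sin.card := by
      refine even_card_of_invol Sin pf ?_ ?_ ?_
      · intro x hx
        obtain ⟨hxS, hxin⟩ := Finset.mem_filter.mp hx
        have hxm : s(x, pf x) ∈ M := hpf x (hSm x hxS)
        have hpp : pf (pf x) = x := hpf_eq (pf x) x (hsymm x (pf x) hxm)
        refine Finset.mem_filter.mpr ⟨?_, ?_⟩
        · simp only [hS, Finset.mem_filter, Finset.mem_univ, true_and]
          exact hxin
        · rw [hpp]; exact (Finset.mem_filter.mp hxS).2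
      · intro x hx
        obtain ⟨hxS, _⟩ := Finset.mem_filter.mp hx
        exact hpf_eq (pf x) x (hsymm x (pf x) (hpf x (hSm x hxS)))
      · intro x hx
        obtain ⟨hxS, _⟩ := Finset.mem_filter.mp hx
        exact (hne x (pf x) (hpf x (hSm x hxS))).symm
    -- the crossing-pair set equals the image of Sout
    have hPS : {p : Sym2 A | p ∈ M ∧ ∃ a b : A, p = s(a, b) ∧
        (ml a : ℕ) + 1 = j ∧ (ml b : ℕ) = j} =
        ↑(Sout.image (fun x => s(x, pf x))) := by
      ext p
      simp only [Set.mem_setOf_eq, Finset.coe_image, Set.mem_image, Finset.mem_coe]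
      constructor
      · rintro ⟨hpM, a, b, rfl, ha, hb⟩
        have hpfa : pf a = b := hpf_eq a b hpM
        refine ⟨a, ?_, by rw [hpfa]⟩
        refine Finset.mem_filter.mpr ⟨?_, ?_⟩
        · simp only [hS, Finset.mem_filter, Finset.mem_univ, true_and]; omega
        · rw [hpfa]; omega
      · rintro ⟨x, hx, rfl⟩
        obtain ⟨hxS, hxout⟩ := Finset.mem_filter.mp hx
        have hxj := (Finset.mem_filter.mp hxS).2
        have hxm : s(x, pf x) ∈ M := hpf x (hSm x hxS)
        rcases part1 x (pf x) hxm with h | h | h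
        · exfalso; rw [h] at hxj; exact hxout hxj
        · exact ⟨hxm, x, pf x, rfl, by omega, by omega⟩
        · exfalso; omega
    have hinjout : Set.InjOn (fun x => s(x, pf x)) Sout := by
      intro x hx y hy hxy
      simp only [Sym2.eq, Sym2.rel_iff', Prod.mk.injEq, Prod.swap_prod_mk] at hxy
      rcases hxy with ⟨h1, _⟩ | ⟨h1, h2⟩
      · exact h1
      · exfalso
        obtain ⟨hxS, _⟩ := Finset.mem_filter.mp hx
        obtain ⟨hyS, hyout⟩ := Finset.mem_filter.mp hy
        have hxj := (Finset.mem_filter.mp hxS).2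
        rw [← h1] at hyout
        exact hyout hxj
    have hncard : {p : Sym2 A | p ∈ M ∧ ∃ a b : A, p = s(a, b) ∧
        (ml a : ℕ) + 1 = j ∧ (ml b : ℕ) = j}.ncard = Sout.card := by
      rw [hPS, Set.ncard_coe_finset, Finset.card_image_of_injOn hinjout]
    have hSset : {a : A | (ml a : ℕ) < j}.ncard = S.card := by
      rw [show {a : A | (ml a : ℕ) < j} = ↑S by
        ext x; simp [hS], Set.ncard_coe_finset]
    obtain ⟨k, hk⟩ := hinEven
    constructor
    · intro hodd
      rw [hSset] at hodd
      rw [Nat.odd_iff] at hodd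
      rw [hncard]
      omega
    · intro heven
      rw [hSset] at heven
      rw [Nat.even_iff] at heven
      rw [hncard]
      omega
  · -- part (3)
    set U : Finset A := Finset.univ.filter (fun a => ¬ Matched M a) with hU
    set Mt : Finset A := Finset.univ.filter (fun a => Matched M a) with hMt
    have hsplit : Mt.card + U.card = Fintype.card A := by
      rw [hMt, hU, Finset.card_filter_add_card_filter_not, Finset.card_univ]
    have hUle : U.card ≤ 1 := by
      refine Finset.card_le_one.mpr ?_
      intro x hx y hy
      exact huu x y (Finset.mem_filter.mp hx).2 (Finset.mem_filter.mp hy).2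
    have hMtEven : Even Mt.card := by
      refine even_card_of_invol Mt pf ?_ ?_ ?_
      · intro x hx
        have hxm := (Finset.mem_filter.mp hx).2
        exact Finset.mem_filter.mpr ⟨Finset.mem_univ _,
          ⟨x, hsymm x (pf x) (hpf x hxm)⟩⟩
      · intro x hx
        exact hpf_eq (pf x) x (hsymm x (pf x) (hpf x (Finset.mem_filter.mp hx).2))
      · intro x hx
        exact (hne x (pf x) (hpf x (Finset.mem_filter.mp hx).2)).symm
    obtain ⟨k, hk⟩ := hMtEven
    constructor
    · intro hev
      rw [Nat.even_iff] at hev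
      have hU0 : U.card = 0 := by omega
      intro a
      by_contra hm
      have : a ∈ U := Finset.mem_filter.mpr ⟨Finset.mem_univ _, hm⟩
      rw [Finset.card_eq_zero.mp hU0] at this
      exact absurd this (Finset.notMem_empty a)
    · intro hodd
      rw [Nat.odd_iff] at hodd
      have hU1 : U.card = 1 := by omega
      obtain ⟨a, ha⟩ := Finset.card_eq_one.mp hU1
      have haU : a ∈ U := ha ▸ Finset.mem_singleton_self a
      have ham : ¬ Matched M a := (Finset.mem_filter.mp haU).2
      refine ⟨a, ham, hunm_class a ham, ?_⟩
      intro b hb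
      have : b ∈ U := Finset.mem_filter.mpr ⟨Finset.mem_univ _, hb⟩
      rw [ha] at this
      exact Finset.mem_singleton.mp this
end

section
/- Let (A, P) be an SR instance whose agent set is partitioned as A = F ⊎ S such that every agent in F has complete preferences derived from one common strict master list over A (the agents in S, called outliers, may have arbitrary preferences). If M and M' are stable matchings of (A, P) that contain exactly the same set of pairs with both endpoints in S, then M = M'. -/
/-- Key lemma: if `x` is an agent of minimum master-list value among all agents whose
set of partners differs between `M` and `M'`, `x` is matched in `M` to `z`, and `x`
prefers `z` to any partner it has in `M'`, we reach a contradiction. -/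
private lemma key_lemma {A : Type*} [DecidableEq A] (P : PrefProfile A)
    (hstrict : P.Strict) (S : Finset A) (ml : A → ℕ) (hml : Function.Injective ml)
    (hF : ∀ a ∉ S, (∀ b : A, b ∈ P.acc a ↔ b ≠ a) ∧
        ∀ b c : A, b ≠ a → c ≠ a → (P.Prefers a b c ↔ ml b < ml c))
    (M M' : Finset (Sym2 A)) (hM : IsStable P M) (hM' : IsStable P M')
    (hSS : ∀ a b : A, a ∈ S → b ∈ S → (s(a, b) ∈ M ↔ s(a, b) ∈ M'))
    (x z : A) (hxz : s(x, z) ∈ M)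
    (hxpref : ∀ c, s(x, c) ∈ M' → P.Prefers x z c)
    (hxmin : ∀ d, (¬ ∀ b, (s(d, b) ∈ M ↔ s(d, b) ∈ M')) → ml x ≤ ml d) : False := by
  obtain ⟨⟨hMnd, hMuniq⟩, hMacc, hMnb⟩ := hM
  obtain ⟨⟨hM'nd, hM'uniq⟩, hM'acc, hM'nb⟩ := hM'
  have swapM : ∀ a b : A, s(a, b) ∈ M → s(b, a) ∈ M := by
    intro a b h; rwa [Sym2.eq_swap] at h
  have swapM' : ∀ a b : A, s(a, b) ∈ M' → s(b, a) ∈ M' := by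
    intro a b h; rwa [Sym2.eq_swap] at h
  have ndM : ∀ a b : A, s(a, b) ∈ M → a ≠ b := by
    intro a b h heq
    exact hMnd _ h (by rw [Sym2.mk_isDiag_iff]; exact heq)
  have ndM' : ∀ a b : A, s(a, b) ∈ M' → a ≠ b := by
    intro a b h heq
    exact hM'nd _ h (by rw [Sym2.mk_isDiag_iff]; exact heq)
  have prefIrr : ∀ a b : A, ¬ P.Prefers a b b := by
    intro a b; exact lt_irrefl _
  have rankLt : ∀ a b c : A, b ∈ P.acc a → c ∈ P.acc a → b ≠ c →
      ¬ P.Prefers a b c → P.Prefers a c b := by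
    intro a b c hb hc hne h
    show P.rank a c < P.rank a b
    exact lt_of_le_of_ne (Nat.le_of_not_lt h) (fun he => hne (hstrict a c hc b hb he).symm)
  have hlt : ∀ d, (¬ ∀ b, (s(d, b) ∈ M ↔ s(d, b) ∈ M')) → d ≠ x → ml x < ml d := by
    intro d hd hne
    exact lt_of_le_of_ne (hxmin d hd) (fun h => hne (hml h.symm))
  have hxzne : x ≠ z := ndM x z hxz
  have haccxz : z ∈ P.acc x := hMacc x z hxz
  have hacczx : x ∈ P.acc z := hMacc z x (swapM x z hxz)
  -- Step I: z ∈ S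
  have hzS : z ∈ S := by
    by_contra hzF
    have hzcond : ¬ ∀ c, s(z, c) ∈ M' → P.Prefers z x c :=
      fun hc => hM'nb x z ⟨haccxz, hacczx, hxpref, hc⟩
    push_neg at hzcond
    obtain ⟨c, hzc, hnp⟩ := hzcond
    have hcx : c ≠ x := by
      intro he
      exact prefIrr x z (hxpref z (swapM' z x (he ▸ hzc)))
    have hcz : c ≠ z := (ndM' z c hzc).symm
    have hcD : ¬ ∀ b, (s(c, b) ∈ M ↔ s(c, b) ∈ M') := by
      intro hall
      have h1 : s(z, c) ∈ M := swapM c z ((hall z).mpr (swapM' z c hzc))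
      exact hcx (hMuniq z x c (swapM x z hxz) h1).symm
    have h1 : ml x < ml c := hlt c hcD hcx
    exact hnp (((hF z hzF).2 x c (Ne.symm hxzne).symm hcz).mpr h1)
  -- Step II: x ∉ S
  have hxS : x ∉ S := fun hxS' => prefIrr x z (hxpref z ((hSS x z hxS' hzS).mp hxz))
  obtain ⟨hxacc, hxmliff⟩ := hF x hxS
  -- The cross-pair fact (A1)
  have A1 : ∀ y, y ∉ S → (¬ ∀ b, (s(y, b) ∈ M ↔ s(y, b) ∈ M')) → y ≠ x → ml z < ml y := by
    intro y yF yD yne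
    have hyz : y ≠ z := by intro he; exact yF (he ▸ hzS)
    have hYcond : ∀ c, s(y, c) ∈ M → P.Prefers y x c := by
      intro c hc
      have hcy : c ≠ y := (ndM y c hc).symm
      have hcx : c ≠ x := by
        intro he
        exact hyz (hMuniq x z y hxz (swapM y x (he ▸ hc))).symm
      have hcD : ¬ ∀ b, (s(c, b) ∈ M ↔ s(c, b) ∈ M') := by
        intro hall
        have h' : s(y, c) ∈ M' := swapM' c y ((hall y).mp (swapM y c hc))
        refine yD (fun b => ⟨fun hb => ?_, fun hb => ?_⟩)
        · rwa [← hMuniq y c b hc hb]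
        · rwa [hM'uniq y c b h' hb] at hc
      exact ((hF y yF).2 x c (Ne.symm yne) hcy).mpr (hlt c hcD hcx)
    have hnC : ¬ ∀ c, s(x, c) ∈ M → P.Prefers x y c :=
      fun hC => hMnb x y ⟨(hxacc y).mpr yne, ((hF y yF).1 x).mpr (Ne.symm yne), hC, hYcond⟩
    push_neg at hnC
    obtain ⟨c, hc, hnp⟩ := hnC
    have hcz : z = c := hMuniq x z c hxz hc
    subst hcz
    have hle : ml z ≤ ml y := Nat.le_of_not_lt (fun h => hnp ((hxmliff y z yne hxzne.symm).mpr h))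
    exact lt_of_le_of_ne hle (fun he => hyz (hml he).symm)
  -- Main descent
  have main : ∀ n : ℕ, ∀ s g : A, ml s < n → s ∈ S → s(s, g) ∈ M' →
      (∀ c, s(s, c) ∈ M → P.Prefers s g c) → ml s ≤ ml z → False := by
    intro n
    induction n with
    | zero => intro s g h; exact absurd h (Nat.not_lt_zero _)
    | succ n ih =>
      intro s g hsn hsS hsg hspref hsle
      have hsgne : s ≠ g := ndM' s g hsg
      have hsx : s ≠ x := fun he => hxS (he ▸ hsS)
      have hgS : g ∉ S := fun hgS' => prefIrr s g (hspref g ((hSS s g hsS hgS').mpr hsg))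
      have hgx : g ≠ x := by
        intro he
        have h1 : P.Prefers x z s := hxpref s (swapM' s x (he ▸ hsg))
        have h2 : ml z < ml s := (hxmliff z s hxzne.symm hsx).mp h1
        omega
      obtain ⟨gacc, gml⟩ := hF g hgS
      -- first elimination: pair {s, g} does not block M
      have hnB : ¬ ∀ c, s(g, c) ∈ M → P.Prefers g s c :=
        fun hgcond => hMnb s g ⟨hM'acc s g hsg, hM'acc g s (swapM' s g hsg), hspref, hgcond⟩
      push_neg at hnB
      obtain ⟨c, hgc, hnp⟩ := hnB
      have hcg : c ≠ g := (ndM g c hgc).symm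
      have hcs : c ≠ s := by
        intro he
        exact prefIrr s g (hspref g (swapM g s (he ▸ hgc)))
      have hcml : ml c < ml s := by
        have h1 : ¬ ml s < ml c := fun h => hnp ((gml s c hsgne hcg).mpr h)
        exact lt_of_le_of_ne (Nat.le_of_not_lt h1) (fun he => hcs (hml he))
      have hcx : c ≠ x := by
        intro he
        exact hgS ((hMuniq x z g hxz (swapM g x (he ▸ hgc))) ▸ hzS)
      have hcD : ¬ ∀ b, (s(c, b) ∈ M ↔ s(c, b) ∈ M') := by
        intro hall
        have h' : s(g, c) ∈ M' := swapM' c g ((hall g).mp (swapM g c hgc))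
        exact hcs (hM'uniq g s c (swapM' s g hsg) h').symm
      have hcS : c ∈ S := by
        by_contra hcF
        have := A1 c hcF hcD hcx
        omega
      -- second elimination: pair {g, c} does not block M'
      have hgcond' : ∀ c₂, s(g, c₂) ∈ M' → P.Prefers g c c₂ := by
        intro c₂ h
        have he : s = c₂ := hM'uniq g s c₂ (swapM' s g hsg) h
        subst he
        exact (gml c s hcg hsgne).mpr hcml
      have hnC : ¬ ∀ c₂, s(c, c₂) ∈ M' → P.Prefers c g c₂ :=
        fun hccond => hM'nb g c ⟨hMacc g c hgc, hMacc c g (swapM g c hgc), hgcond', hccond⟩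
      push_neg at hnC
      obtain ⟨c₂, hcc₂, hnp₂⟩ := hnC
      have hc₂g : c₂ ≠ g := by
        intro he
        exact hcs (hM'uniq g s c (swapM' s g hsg) (swapM' c g (he ▸ hcc₂))).symm
      have hpref₂ : P.Prefers c c₂ g :=
        rankLt c g c₂ (hMacc c g (swapM g c hgc)) (hM'acc c c₂ hcc₂) (Ne.symm hc₂g) hnp₂
      have hccond : ∀ c₃, s(c, c₃) ∈ M → P.Prefers c c₂ c₃ := by
        intro c₃ h
        have he : g = c₃ := hMuniq c g c₃ (swapM g c hgc) h
        subst he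
        exact hpref₂
      exact ih c c₂ (by omega) hcS hcc₂ hccond (by omega)
  -- conclude: launch the descent from z
  have hzcond : ¬ ∀ c, s(z, c) ∈ M' → P.Prefers z x c :=
    fun hc => hM'nb x z ⟨haccxz, hacczx, hxpref, hc⟩
  push_neg at hzcond
  obtain ⟨w, hzw, hnpw⟩ := hzcond
  have hwx : w ≠ x := by
    intro he
    exact prefIrr x z (hxpref z (swapM' z x (he ▸ hzw)))
  have hwpref : P.Prefers z w x :=
    rankLt z x w hacczx (hM'acc z w hzw) (Ne.symm hwx) hnpw
  have hzcond2 : ∀ c₃, s(z, c₃) ∈ M → P.Prefers z w c₃ := by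
    intro c₃ h
    have he : x = c₃ := hMuniq z x c₃ (swapM x z hxz) h
    subst he
    exact hwpref
  exact main (ml z + 1) z w (by omega) hzS hzw hzcond2 le_rfl

/-- If all agents outside the outlier set `S` have complete preferences derived from a
common strict master list `ml`, then two stable matchings containing exactly the same
set of pairs with both endpoints in `S` are equal. -/
theorem stmt3 {A : Type*} [Fintype A] [DecidableEq A]
    (P : PrefProfile A) (hl : P.Lawful) (hstrict : P.Strict)
    (S : Finset A) (ml : A → ℕ) (hml : Function.Injective ml)
    (hF : ∀ a ∉ S, (∀ b : A, b ∈ P.acc a ↔ b ≠ a) ∧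
        ∀ b c : A, b ≠ a → c ≠ a → (P.Prefers a b c ↔ ml b < ml c))
    (M M' : Finset (Sym2 A)) (hM : IsStable P M) (hM' : IsStable P M')
    (hsame : {p : Sym2 A | p ∈ M ∧ ∀ a ∈ p, a ∈ S} =
             {p : Sym2 A | p ∈ M' ∧ ∀ a ∈ p, a ∈ S}) :
    M = M' := by
  classical
  by_contra hne
  -- same pairs within S
  have hSS : ∀ a b : A, a ∈ S → b ∈ S → (s(a, b) ∈ M ↔ s(a, b) ∈ M') := by
    intro a b ha hb
    have hmem : ∀ c ∈ s(a, b), c ∈ S := by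
      intro c hc
      rcases Sym2.mem_iff.mp hc with rfl | rfl <;> assumption
    constructor
    · intro h
      have : s(a, b) ∈ {p : Sym2 A | p ∈ M' ∧ ∀ a ∈ p, a ∈ S} := by
        rw [← hsame]; exact ⟨h, hmem⟩
      exact this.1
    · intro h
      have : s(a, b) ∈ {p : Sym2 A | p ∈ M ∧ ∀ a ∈ p, a ∈ S} := by
        rw [hsame]; exact ⟨h, hmem⟩
      exact this.1
  have hSS' : ∀ a b : A, a ∈ S → b ∈ S → (s(a, b) ∈ M' ↔ s(a, b) ∈ M) :=
    fun a b ha hb => (hSS a b ha hb).symm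
  -- the set of differing agents is nonempty
  have hEx : ∃ d : A, ¬ ∀ b, (s(d, b) ∈ M ↔ s(d, b) ∈ M') := by
    by_contra hall
    push_neg at hall
    apply hne
    ext p
    induction p using Sym2.ind with
    | _ a b => exact hall a b
  obtain ⟨d₀, hd₀⟩ := hEx
  -- pick the minimal one
  obtain ⟨x, hxD, hxmin⟩ :=
    (Finset.univ.filter (fun a : A => ¬ ∀ b, (s(a, b) ∈ M ↔ s(a, b) ∈ M'))).exists_min_image
      ml ⟨d₀, Finset.mem_filter.mpr ⟨Finset.mem_univ _, hd₀⟩⟩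
  have hxD' : ¬ ∀ b, (s(x, b) ∈ M ↔ s(x, b) ∈ M') := (Finset.mem_filter.mp hxD).2
  have hxmin' : ∀ d, (¬ ∀ b, (s(d, b) ∈ M ↔ s(d, b) ∈ M')) → ml x ≤ ml d :=
    fun d hd => hxmin d (Finset.mem_filter.mpr ⟨Finset.mem_univ _, hd⟩)
  have hxD'' : ¬ ∀ b, (s(x, b) ∈ M' ↔ s(x, b) ∈ M) :=
    fun hall => hxD' (fun b => (hall b).symm)
  have hxmin'' : ∀ d, (¬ ∀ b, (s(d, b) ∈ M' ↔ s(d, b) ∈ M)) → ml x ≤ ml d :=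
    fun d hd => hxmin' d (fun hall => hd (fun b => (hall b).symm))
  have rankLt : ∀ a b c : A, b ∈ P.acc a → c ∈ P.acc a → b ≠ c →
      ¬ P.Prefers a b c → P.Prefers a c b := by
    intro a b c hb hc hne' h
    show P.rank a c < P.rank a b
    exact lt_of_le_of_ne (Nat.le_of_not_lt h) (fun he => hne' (hstrict a c hc b hb he).symm)
  have hxDn : ¬ ∀ b, (s(x, b) ∈ M ↔ s(x, b) ∈ M') := (Finset.mem_filter.mp hxD).2
  push_neg at hxDn
  obtain ⟨b, hb⟩ := hxDn
  rcases hb with ⟨h1, h2⟩ | ⟨h1, h2⟩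
  · by_cases hx' : ∀ c, s(x, c) ∈ M' → P.Prefers x b c
    · exact key_lemma P hstrict S ml hml hF M M' hM hM' hSS x b h1 hx' hxmin'
    · push_neg at hx'
      obtain ⟨c, hc, hnp⟩ := hx'
      have hcb : b ≠ c := fun he => (he ▸ h2) hc
      have hpref : P.Prefers x c b :=
        rankLt x b c (hM.2.1 x b h1) (hM'.2.1 x c hc) hcb hnp
      have hcond : ∀ c₂, s(x, c₂) ∈ M → P.Prefers x c c₂ := by
        intro c₂ h
        have he : b = c₂ := hM.1.2 x b c₂ h1 h
        subst he
        exact hpref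
      exact key_lemma P hstrict S ml hml hF M' M hM' hM hSS' x c hc hcond hxmin''
  · by_cases hx' : ∀ c, s(x, c) ∈ M → P.Prefers x b c
    · exact key_lemma P hstrict S ml hml hF M' M hM' hM hSS' x b h2 hx' hxmin''
    · push_neg at hx'
      obtain ⟨c, hc, hnp⟩ := hx'
      have hcb : b ≠ c := fun he => (he ▸ h1) hc
      have hpref : P.Prefers x c b :=
        rankLt x b c (hM'.2.1 x b h2) (hM.2.1 x c hc) hcb hnp
      have hcond : ∀ c₂, s(x, c₂) ∈ M' → P.Prefers x c c₂ := by
        intro c₂ h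
        have he : b = c₂ := hM'.1.2 x b c₂ h2 h
        subst he
        exact hpref
      exact key_lemma P hstrict S ml hml hF M M' hM hM' hSS x c hc hcond hxmin'
end

section
/- Let (A, P) be an SR instance whose agent set is partitioned as A = F ⊎ S such that every agent in F has complete preferences derived from one common strict master list over A. Then the number of stable matchings of (A, P) is at most the number of matchings on the set S, i.e., the number of sets of pairwise disjoint unordered pairs of elements of S (including the empty set). -/
section Helpers

set_option linter.unusedSectionVars false

variable {A : Type*} [DecidableEq A]

private lemma mem_swap' {M : Finset (Sym2 A)} {x y : A} : s(x, y) ∈ M ↔ s(y, x) ∈ M := by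
  rw [Sym2.eq_swap]

private lemma mem_ne {M : Finset (Sym2 A)} (hM : IsMatching M) {x y : A}
    (h : s(x, y) ∈ M) : x ≠ y := by
  intro he
  exact hM.1 _ h (by subst he; simp)

private lemma pref_total (P : PrefProfile A) (hstrict : P.Strict) {a b c : A}
    (hb : b ∈ P.acc a) (hc : c ∈ P.acc a) (hne : b ≠ c) (h : ¬ P.Prefers a c b) :
    P.Prefers a b c := by
  unfold PrefProfile.Prefers at *
  rcases lt_trichotomy (P.rank a b) (P.rank a c) with h1 | h1 | h1
  · exact h1
  · exact absurd (hstrict a b hb c hc h1) hne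
  · exact absurd h1 h

/-- The descent lemma: given an anchor agent `a ∉ S` matched in `M₁` to `u ∈ S`
which it prefers over its `M₂`-situation, there is no "descent configuration". -/
private lemma DL (P : PrefProfile A) (hl : P.Lawful) (hstrict : P.Strict)
    (S : Finset A) (ml : A → ℕ) (hml : Function.Injective ml)
    (hF : ∀ a ∉ S, (∀ b : A, b ∈ P.acc a ↔ b ≠ a) ∧
        ∀ b c : A, b ≠ a → c ≠ a → (P.Prefers a b c ↔ ml b < ml c))
    (M₁ M₂ : Finset (Sym2 A)) (h₁ : IsStable P M₁) (h₂ : IsStable P M₂)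
    (hfil : ∀ x y : A, x ∈ S → y ∈ S → (s(x, y) ∈ M₁ ↔ s(x, y) ∈ M₂))
    (a u : A) (haS : a ∉ S) (huS : u ∈ S) (hau : s(a, u) ∈ M₁)
    (hpref : ∀ c, s(a, c) ∈ M₂ → P.Prefers a u c)
    (IH : ∀ b, ml b < ml a → ∀ c, (s(b, c) ∈ M₁ ↔ s(b, c) ∈ M₂)) :
    ∀ n x y, ml x = n → s(x, y) ∈ M₂ → s(x, y) ∉ M₁ → y ∉ S →
      (∀ c, s(x, c) ∈ M₁ → P.Prefers x y c) → ml x ≤ ml u → False := by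
  intro n
  induction n using Nat.strong_induction_on with
  | _ n ihn =>
  intro x y hn hxy2 hxy1 hyS hconf hxu
  have hxny : x ≠ y := mem_ne h₂.1 hxy2
  have haccxy : y ∈ P.acc x := h₂.2.1 x y hxy2
  have haccyx : x ∈ P.acc y := hl.2 x y haccxy
  -- step 1: {x, y} would block M₁, so y has an M₁-partner e that y prefers to x
  have hD : ¬ ∀ c, s(y, c) ∈ M₁ → P.Prefers y x c := fun hD =>
    h₁.2.2 x y ⟨haccxy, haccyx, hconf, hD⟩
  push_neg at hD
  obtain ⟨e, he1, hnpe⟩ := hD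
  have hyne : y ≠ e := mem_ne h₁.1 he1
  have hacc_ye : e ∈ P.acc y := h₁.2.1 y e he1
  have henx : e ≠ x := by
    rintro rfl; exact hxy1 (mem_swap'.mp he1)
  have hpyex : P.Prefers y e x := pref_total P hstrict hacc_ye haccyx henx hnpe
  have hmlex : ml e < ml x := ((hF y hyS).2 e x hyne.symm hxny).mp hpyex
  have hye2 : s(y, e) ∉ M₂ := by
    intro h; exact henx (h₂.1.2 y e x h (mem_swap'.mp hxy2))
  have hena : e ≠ a := by
    rintro rfl
    have hyu : y = u := h₁.1.2 e y u (mem_swap'.mp he1) hau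
    exact hyS (hyu ▸ huS)
  -- step 2: {y, e} would block M₂, so e has an M₂-partner g that e prefers to y
  have hacc_ey : y ∈ P.acc e := hl.2 y e hacc_ye
  have hD2 : ¬ ∀ c, s(e, c) ∈ M₂ → P.Prefers e y c := by
    intro hD2
    refine h₂.2.2 y e ⟨hacc_ye, hacc_ey, ?_, hD2⟩
    intro c hc
    have hcx : c = x := h₂.1.2 y c x hc (mem_swap'.mp hxy2)
    exact hcx ▸ hpyex
  push_neg at hD2
  obtain ⟨g, hg2, hnpg⟩ := hD2
  have hgne : g ≠ e := (mem_ne h₂.1 hg2).symm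
  have hgny : g ≠ y := by
    rintro rfl; exact hye2 (mem_swap'.mp hg2)
  have hacc_eg : g ∈ P.acc e := h₂.2.1 e g hg2
  have hpegy : P.Prefers e g y := pref_total P hstrict hacc_eg hacc_ey hgny hnpg
  have hg1 : s(e, g) ∉ M₁ := by
    intro h; exact hgny (h₁.1.2 e g y h (mem_swap'.mp he1))
  have huna : u ≠ a := (mem_ne h₁.1 hau).symm
  have hgna : g ≠ a := by
    rintro rfl
    have h' : P.Prefers g u e := hpref e (mem_swap'.mp hg2)
    have : ml u < ml e := ((hF g haS).2 u e huna hena).mp h'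
    omega
  by_cases heS : e ∈ S
  · -- recurse with a strictly smaller configuration
    have hgS : g ∉ S := fun hgS => hg1 ((hfil e g heS hgS).mpr hg2)
    refine ihn (ml e) (by omega) e g rfl hg2 hg1 hgS ?_ (by omega)
    intro c hc
    have hcy : c = y := h₁.1.2 e c y hc (mem_swap'.mp he1)
    exact hcy ▸ hpegy
  · -- e ∉ S : the pair {a, e} blocks M₂, contradiction
    have hFe := hF e heS
    refine h₂.2.2 a e ⟨((hF a haS).1 e).mpr hena, (hFe.1 a).mpr hena.symm, ?_, ?_⟩
    · intro c hc
      have h1 := hpref c hc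
      have hcna : c ≠ a := (mem_ne h₂.1 hc).symm
      have h2 : ml u < ml c := ((hF a haS).2 u c huna hcna).mp h1
      exact ((hF a haS).2 e c hena hcna).mpr (by omega)
    · intro c hc
      have hcg : c = g := h₂.1.2 e c g hc hg2
      subst hcg
      have hnlt : ¬ ml c < ml a := fun hlt =>
        hg1 (mem_swap'.mp ((IH c hlt e).mpr (mem_swap'.mp hg2)))
      have hne' : ml a ≠ ml c := fun h => hgna (hml h.symm)
      exact (hFe.2 a c hena.symm hgne).mpr (by omega)

/-- One-sided contradiction lemma: if `a` disagrees between `M₁` and `M₂` and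
weakly prefers its `M₁`-partner `u` over its `M₂`-situation, and all agents with
smaller master-list value agree, we get a contradiction. -/
private lemma OSL (P : PrefProfile A) (hl : P.Lawful) (hstrict : P.Strict)
    (S : Finset A) (ml : A → ℕ) (hml : Function.Injective ml)
    (hF : ∀ a ∉ S, (∀ b : A, b ∈ P.acc a ↔ b ≠ a) ∧
        ∀ b c : A, b ≠ a → c ≠ a → (P.Prefers a b c ↔ ml b < ml c))
    (M₁ M₂ : Finset (Sym2 A)) (h₁ : IsStable P M₁) (h₂ : IsStable P M₂)
    (hfil : ∀ x y : A, x ∈ S → y ∈ S → (s(x, y) ∈ M₁ ↔ s(x, y) ∈ M₂))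
    (a u : A) (hau : s(a, u) ∈ M₁)
    (hpref : ∀ c, s(a, c) ∈ M₂ → P.Prefers a u c)
    (IH : ∀ b, ml b < ml a → ∀ c, (s(b, c) ∈ M₁ ↔ s(b, c) ∈ M₂)) : False := by
  have hau2 : s(a, u) ∉ M₂ := fun h => lt_irrefl _ (hpref u h)
  have hanu : a ≠ u := mem_ne h₁.1 hau
  have haccau : u ∈ P.acc a := h₁.2.1 a u hau
  have haccua : a ∈ P.acc u := hl.2 a u haccau
  -- {a, u} would block M₂, so u has an M₂-partner w that u prefers to a
  have hD : ¬ ∀ c, s(u, c) ∈ M₂ → P.Prefers u a c := fun hD =>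
    h₂.2.2 a u ⟨haccau, haccua, hpref, hD⟩
  push_neg at hD
  obtain ⟨w, hw2, hnpw⟩ := hD
  have hwnu : w ≠ u := (mem_ne h₂.1 hw2).symm
  have hwna : w ≠ a := by
    rintro rfl; exact hau2 (mem_swap'.mp hw2)
  have haccuw : w ∈ P.acc u := h₂.2.1 u w hw2
  have hpuwa : P.Prefers u w a := pref_total P hstrict haccuw haccua hwna hnpw
  have hw1 : s(u, w) ∉ M₁ := by
    intro h; exact hwna (h₁.1.2 u w a h (mem_swap'.mp hau))
  by_cases huS : u ∈ S
  · by_cases haS : a ∈ S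
    · exact hau2 ((hfil a u haS huS).mp hau)
    · -- launch the descent
      have hwS : w ∉ S := fun hwS => hw1 ((hfil u w huS hwS).mpr hw2)
      refine DL P hl hstrict S ml hml hF M₁ M₂ h₁ h₂ hfil a u haS huS hau hpref IH
        (ml u) u w rfl hw2 hw1 hwS ?_ le_rfl
      intro c hc
      have hca : c = a := h₁.1.2 u c a hc (mem_swap'.mp hau)
      exact hca ▸ hpuwa
  · -- u ∉ S : then w has smaller ml-value than a, so w agrees, contradiction
    have hmlwa : ml w < ml a := ((hF u huS).2 w a hwnu hanu).mp hpuwa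
    exact hw1 (mem_swap'.mp ((IH w hmlwa u).mpr (mem_swap'.mp hw2)))

/-- Uniqueness: two stable matchings with the same set of pairs inside `S` coincide. -/
private lemma unique_stable (P : PrefProfile A) (hl : P.Lawful) (hstrict : P.Strict)
    (S : Finset A) (ml : A → ℕ) (hml : Function.Injective ml)
    (hF : ∀ a ∉ S, (∀ b : A, b ∈ P.acc a ↔ b ≠ a) ∧
        ∀ b c : A, b ≠ a → c ≠ a → (P.Prefers a b c ↔ ml b < ml c))
    (M₁ M₂ : Finset (Sym2 A)) (h₁ : IsStable P M₁) (h₂ : IsStable P M₂)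
    (hfil : ∀ x y : A, x ∈ S → y ∈ S → (s(x, y) ∈ M₁ ↔ s(x, y) ∈ M₂)) : M₁ = M₂ := by
  have hfil' : ∀ x y : A, x ∈ S → y ∈ S → (s(x, y) ∈ M₂ ↔ s(x, y) ∈ M₁) :=
    fun x y hx hy => (hfil x y hx hy).symm
  have key : ∀ n a, ml a = n → ∀ c, (s(a, c) ∈ M₁ ↔ s(a, c) ∈ M₂) := by
    intro n
    induction n using Nat.strong_induction_on with
    | _ n ihn =>
    intro a hn c
    have IH : ∀ b, ml b < ml a → ∀ c, (s(b, c) ∈ M₁ ↔ s(b, c) ∈ M₂) := by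
      intro b hb c; exact ihn (ml b) (by omega) b rfl c
    have IH' : ∀ b, ml b < ml a → ∀ c, (s(b, c) ∈ M₂ ↔ s(b, c) ∈ M₁) :=
      fun b hb c => (IH b hb c).symm
    constructor
    · intro hm1
      by_contra hm2
      by_cases hp : ∀ d, s(a, d) ∈ M₂ → P.Prefers a c d
      · exact OSL P hl hstrict S ml hml hF M₁ M₂ h₁ h₂ hfil a c hm1 hp IH
      · push_neg at hp
        obtain ⟨d, hd2, hnd⟩ := hp
        have hdc : d ≠ c := by rintro rfl; exact hm2 hd2
        have haccac : c ∈ P.acc a := h₁.2.1 a c hm1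
        have haccad : d ∈ P.acc a := h₂.2.1 a d hd2
        have hpadc : P.Prefers a d c := pref_total P hstrict haccad haccac hdc hnd
        refine OSL P hl hstrict S ml hml hF M₂ M₁ h₂ h₁ hfil' a d hd2 ?_ IH'
        intro e he
        have hec : e = c := h₁.1.2 a e c he hm1
        exact hec ▸ hpadc
    · intro hm2
      by_contra hm1
      by_cases hp : ∀ d, s(a, d) ∈ M₁ → P.Prefers a c d
      · exact OSL P hl hstrict S ml hml hF M₂ M₁ h₂ h₁ hfil' a c hm2 hp IH'
      · push_neg at hp
        obtain ⟨d, hd1, hnd⟩ := hp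
        have hdc : d ≠ c := by rintro rfl; exact hm1 hd1
        have haccac : c ∈ P.acc a := h₂.2.1 a c hm2
        have haccad : d ∈ P.acc a := h₁.2.1 a d hd1
        have hpadc : P.Prefers a d c := pref_total P hstrict haccad haccac hdc hnd
        refine OSL P hl hstrict S ml hml hF M₁ M₂ h₁ h₂ hfil a d hd1 ?_ IH
        intro e he
        have hec : e = c := h₂.1.2 a e c he hm2
        exact hec ▸ hpadc
  ext p
  induction p using Sym2.ind with
  | _ x y => exact key (ml x) x rfl y

end Helpers

/-- If all agents outside the outlier set `S` have complete preferences derived from a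
common strict master list `ml`, then the number of stable matchings is at most the
number of matchings (sets of pairwise disjoint unordered pairs) on `S`. -/
theorem stmt4 {A : Type*} [Fintype A] [DecidableEq A]
    (P : PrefProfile A) (hl : P.Lawful) (hstrict : P.Strict)
    (S : Finset A) (ml : A → ℕ) (hml : Function.Injective ml)
    (hF : ∀ a ∉ S, (∀ b : A, b ∈ P.acc a ↔ b ≠ a) ∧
        ∀ b c : A, b ≠ a → c ≠ a → (P.Prefers a b c ↔ ml b < ml c)) :
    {M : Finset (Sym2 A) | IsStable P M}.ncard ≤
      {N : Finset (Sym2 A) | IsMatching N ∧ ∀ p ∈ N, ∀ a ∈ p, a ∈ S}.ncard := by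
  classical
  refine Set.ncard_le_ncard_of_injOn
    (fun M => M.filter (fun p => ∀ a ∈ p, a ∈ S)) ?_ ?_ (Set.toFinite _)
  · intro M hM
    simp only [Set.mem_setOf_eq] at hM ⊢
    refine ⟨⟨?_, ?_⟩, ?_⟩
    · intro p hp; exact hM.1.1 p (Finset.mem_of_mem_filter p hp)
    · intro x y z hxy hxz
      exact hM.1.2 x y z (Finset.mem_of_mem_filter _ hxy) (Finset.mem_of_mem_filter _ hxz)
    · intro p hp; exact (Finset.mem_filter.mp hp).2
  · intro M hM N hN h
    simp only [Set.mem_setOf_eq] at hM hN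
    replace h : M.filter (fun p => ∀ a ∈ p, a ∈ S) = N.filter (fun p => ∀ a ∈ p, a ∈ S) := h
    refine unique_stable P hl hstrict S ml hml hF M N hM hN ?_
    intro x y hx hy
    have hmem : ∀ a ∈ s(x, y), a ∈ S := by
      intro a ha
      rcases Sym2.mem_iff.mp ha with rfl | rfl
      · exact hx
      · exact hy
    constructor
    · intro hM'
      have h1 : s(x, y) ∈ M.filter (fun p => ∀ a ∈ p, a ∈ S) :=
        Finset.mem_filter.mpr ⟨hM', hmem⟩
      rw [h] at h1
      exact (Finset.mem_filter.mp h1).1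
    · intro hN'
      have h1 : s(x, y) ∈ N.filter (fun p => ∀ a ∈ p, a ∈ S) :=
        Finset.mem_filter.mpr ⟨hN', hmem⟩
      rw [← h] at h1
      exact (Finset.mem_filter.mp h1).1
end

section
/- Let I = (A, P1, P2, M1, k) be an ISR instance such that P2 admits a stable matching. Let A_1 be the set of agents unmatched by M1 and let A_2 be the set of agents unmatched by every stable matching with respect to P2. Construct I' = (A', P1', P2', M1', k') as follows: A' = A ∪ {a' : a ∈ A_2}, with one new agent a' for each a ∈ A_2; in both P1' and P2' each new agent a' accepts only a, and a' is appended at the end of a's preference list in both profiles, while all other preferences are unchanged; M1' = M1 ∪ {{a, a'} : a ∈ A_1 ∩ A_2}; k' = k + |A_2 ∖ A_1|. Then: (a) M1' is stable with respect to P1'; (b) P2' admits a perfect stable matching; and (c) there is a matching M2 stable with respect to P2 with |M1 △ M2| ≤ k if and only if there is a matching M2' stable with respect to P2' with |M1' △ M2'| ≤ k'. -/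
noncomputable section
open Classical

variable {A : Type*} [Fintype A] [DecidableEq A]

/-- The set of agents unmatched by every stable matching w.r.t. `P2`. -/
def A2set (P2 : PrefProfile A) : Finset A :=
  Finset.univ.filter fun a => ∀ M : Finset (Sym2 A), IsStable P2 M → ¬ Matched M a

/-- The set of agents unmatched by `M1`. -/
def A1set (M1 : Finset (Sym2 A)) : Finset A :=
  Finset.univ.filter fun a => ¬ Matched M1 a

/-- The extension of a profile `P` on `A` to the agent set `A ∪ {a' : a ∈ A2}`:
every new agent `a'` (represented as `Sum.inr ⟨a, _⟩`) accepts only `a`, and `a'`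
is appended at the very end of `a`'s preference list; all other preferences are
unchanged. -/
def extProfile5 (P2 P : PrefProfile A) : PrefProfile (A ⊕ {a : A // a ∈ A2set P2}) where
  acc x :=
    match x with
    | Sum.inl a =>
        (P.acc a).image Sum.inl ∪
          (if h : a ∈ A2set P2 then {Sum.inr ⟨a, h⟩} else ∅)
    | Sum.inr b => {Sum.inl b.1}
  rank x y :=
    match x, y with
    | Sum.inl a, Sum.inl b => P.rank a b
    | Sum.inl a, Sum.inr _ => ((P.acc a).sup (P.rank a)) + 1
    | Sum.inr _, _ => 0

/-- `M1' = M1 ∪ {{a, a'} : a ∈ A1 ∩ A2}`. -/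
def extM5 (P2 : PrefProfile A) (M1 : Finset (Sym2 A)) :
    Finset (Sym2 (A ⊕ {a : A // a ∈ A2set P2})) :=
  M1.image (Sym2.map Sum.inl) ∪
    ((A1set M1 ∩ A2set P2).attach.image fun a =>
      s(Sum.inl a.1, Sum.inr ⟨a.1, (Finset.mem_inter.mp a.2).2⟩))

lemma mem_swap'_s5 {A : Type*} {M : Finset (Sym2 A)} {a b : A} (h : s(a,b) ∈ M) : s(b,a) ∈ M := by
  rwa [Sym2.eq_swap]

lemma stepLemma {A : Type*} (P : PrefProfile A) (hs : P.Strict) {N : Finset (Sym2 A)}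
    (hN : IsStable P N) {b c : A} (hcb : c ∈ P.acc b) (hbc : b ∈ P.acc c)
    (hb : ∀ d, s(b,d) ∈ N → P.Prefers b c d) :
    ∃ d, s(c,d) ∈ N ∧ P.Prefers c d b := by
  have hnb := hN.2.2 b c
  rw [Blocks] at hnb
  push_neg at hnb
  obtain ⟨e, he, hpe⟩ := hnb hcb hbc hb
  have heb : e ≠ b := by
    rintro rfl
    exact absurd (hb c (mem_swap'_s5 he)) (by simp [PrefProfile.Prefers])
  have heacc : e ∈ P.acc c := hN.2.1 c e he
  refine ⟨e, he, lt_of_le_of_ne (not_lt.mp hpe) ?_⟩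
  intro h; exact heb (hs c e heacc b hbc h)

theorem lone_wolf {A : Type*} [Finite A] (P : PrefProfile A) (hs : P.Strict)
    {M M' : Finset (Sym2 A)} (hM : IsStable P M) (hM' : IsStable P M')
    {a : A} (ha : Matched M a) : Matched M' a := by
  by_contra ha'
  set mat : ℕ → Finset (Sym2 A) := fun n => if n % 2 = 0 then M else M' with hmat
  have hstab : ∀ n, IsStable P (mat n) := by
    intro n; simp only [hmat]; split <;> assumption
  have hmatper : ∀ m n : ℕ, m % 2 = n % 2 → mat m = mat n := by
    intro m n h; simp only [hmat, h]
  set Q : ℕ → A × A → Prop :=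
    fun n p => s(p.1, p.2) ∈ mat n ∧ ∀ d, s(p.1, d) ∈ mat (n+1) → P.Prefers p.1 p.2 d with hQ
  obtain ⟨a1, ha1⟩ := ha
  have hbase : Q 0 (a, a1) := by
    constructor
    · simpa [hmat] using ha1
    · intro d hd
      exact absurd ⟨d, by simpa [hmat] using hd⟩ ha'
  have hstep : ∀ n (p : A × A), Q n p → ∃ d, Q (n+1) (p.2, d) := by
    rintro n ⟨b, c⟩ ⟨hbc, hcond⟩
    have hacc1 : c ∈ P.acc b := (hstab n).2.1 b c hbc
    have hacc2 : b ∈ P.acc c := (hstab n).2.1 c b (mem_swap'_s5 hbc)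
    obtain ⟨d, hd, hpref⟩ := stepLemma P hs (hstab (n+1)) hacc1 hacc2 hcond
    refine ⟨d, hd, fun e he => ?_⟩
    rw [hmatper (n+2) n (by omega)] at he
    have : e = b := (hstab n).1.2 c e b he (mem_swap'_s5 hbc)
    rwa [this]
  let g : ∀ n, {p : A × A // Q n p} := fun n =>
    Nat.rec ⟨(a, a1), hbase⟩
      (fun n ih => ⟨(ih.1.2, Classical.choose (hstep n ih.1 ih.2)),
        Classical.choose_spec (hstep n ih.1 ih.2)⟩) n
  set x : ℕ → A := fun n => (g n).1.1 with hx
  have hpair : ∀ n, s(x n, x (n+1)) ∈ mat n := fun n => (g n).2.1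
  have key : ∀ m n : ℕ, m < n → x m = x n → m % 2 = n % 2 → False := by
    intro m n hlt hxeq hpar
    have back : ∀ j, j ≤ m → x (m - j) = x (n - j) := by
      intro j hj
      induction j with
      | zero => simpa using hxeq
      | succ j ih =>
        have hj' : j ≤ m := by omega
        have ihj := ih hj'
        have h1 : s(x (m - j - 1), x (m - j - 1 + 1)) ∈ mat (m - j - 1) := hpair _
        have h2 : s(x (n - j - 1), x (n - j - 1 + 1)) ∈ mat (n - j - 1) := hpair _
        have e1 : m - j - 1 + 1 = m - j := by omega
        have e2 : n - j - 1 + 1 = n - j := by omega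
        rw [e1] at h1; rw [e2] at h2
        rw [hmatper (n - j - 1) (m - j - 1) (by omega)] at h2
        rw [← ihj] at h2
        have e3 : m - (j+1) = m - j - 1 := by omega
        have e4 : n - (j+1) = n - j - 1 := by omega
        rw [e3, e4]
        exact (hstab (m - j - 1)).1.2 (x (m - j)) (x (m - j - 1)) (x (n - j - 1))
          (mem_swap'_s5 h1) (mem_swap'_s5 h2)
    have h0 : x 0 = x (n - m) := by simpa using back m le_rfl
    have hxa : x 0 = a := rfl
    have ht : s(x (n - m - 1), x (n - m - 1 + 1)) ∈ mat (n - m - 1) := hpair _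
    have e5 : n - m - 1 + 1 = n - m := by omega
    rw [e5] at ht
    have hmm : mat (n - m - 1) = M' := by
      simp only [hmat]
      have : (n - m - 1) % 2 = 1 := by omega
      simp [this]
    rw [hmm, ← h0, hxa] at ht
    exact ha' ⟨x (n - m - 1), mem_swap'_s5 ht⟩
  obtain ⟨m, n, hmn, heq⟩ :=
    Finite.exists_ne_map_eq_of_infinite (fun n => (x n, decide (n % 2 = 0)))
  obtain ⟨hx', hd⟩ := Prod.mk.injEq _ _ _ _ ▸ heq
  have hiff := decide_eq_decide.mp hd
  have hp' : m % 2 = n % 2 := by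
    by_cases h : m % 2 = 0
    · have := hiff.mp h; omega
    · have := mt hiff.mpr h; omega
  rcases Nat.lt_or_ge m n with h | h
  · exact key m n h hx' hp'
  · exact key n m (by omega) hx'.symm hp'.symm
set_option linter.unusedSectionVars false
section Ext
variable {A : Type*} [Fintype A] [DecidableEq A] {P2 : PrefProfile A}

lemma A2_unmatched {a : A} (h : a ∈ A2set P2) {M : Finset (Sym2 A)} (hM : IsStable P2 M) :
    ¬ Matched M a := by
  simp only [A2set, Finset.mem_filter] at h
  exact h.2 M hM

lemma not_A2_matched {a : A} (h : a ∉ A2set P2) (hs2 : P2.Strict) {M : Finset (Sym2 A)}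
    (hM : IsStable P2 M) : Matched M a := by
  simp only [A2set, Finset.mem_filter, Finset.mem_univ, true_and] at h
  push_neg at h
  obtain ⟨N, hN, haN⟩ := h
  exact lone_wolf P2 hs2 hN hM haN

lemma mem_A1 {M1 : Finset (Sym2 A)} {a : A} : a ∈ A1set M1 ↔ ¬ Matched M1 a := by
  simp [A1set]

lemma acc_inl_inl {P : PrefProfile A} {a b : A} :
    (Sum.inl b : A ⊕ {a // a ∈ A2set P2}) ∈ (extProfile5 P2 P).acc (Sum.inl a) ↔ b ∈ P.acc a := by
  simp only [extProfile5, Finset.mem_union, Finset.mem_image]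
  constructor
  · rintro (⟨c, hc, hcb⟩ | h)
    · rwa [← Sum.inl.inj hcb]
    · split_ifs at h <;> simp_all
  · intro h; exact Or.inl ⟨b, h, rfl⟩

lemma acc_inl_inr {P : PrefProfile A} {a : A} {b : {a // a ∈ A2set P2}} :
    (Sum.inr b : A ⊕ {a // a ∈ A2set P2}) ∈ (extProfile5 P2 P).acc (Sum.inl a) ↔ a = b.1 := by
  simp only [extProfile5, Finset.mem_union, Finset.mem_image]
  constructor
  · rintro (⟨c, hc, hcb⟩ | h)
    · exact absurd hcb (by simp)
    · split_ifs at h with hh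
      · simp only [Finset.mem_singleton, Sum.inr.injEq] at h
        simp [h]
      · simp at h
  · rintro rfl
    refine Or.inr ?_
    rw [dif_pos b.2]
    simp
lemma acc_inr {P : PrefProfile A} {b : {a // a ∈ A2set P2}} {y : A ⊕ {a // a ∈ A2set P2}} :
    y ∈ (extProfile5 P2 P).acc (Sum.inr b) ↔ y = Sum.inl b.1 := by
  simp [extProfile5]

lemma rank_le_sup {P : PrefProfile A} {a b : A} (h : b ∈ P.acc a) :
    P.rank a b ≤ (P.acc a).sup (P.rank a) := Finset.le_sup h

lemma prefers_inl_inl {P : PrefProfile A} {a b c : A} :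
    (extProfile5 P2 P).Prefers (Sum.inl a) (Sum.inl b) (Sum.inl c) ↔ P.Prefers a b c := Iff.rfl

lemma not_prefers_inr_left {P : PrefProfile A} {a : A} {b : {a // a ∈ A2set P2}} {c : A}
    (hc : c ∈ P.acc a) :
    ¬ (extProfile5 P2 P).Prefers (Sum.inl a) (Sum.inr b) (Sum.inl c) := by
  simp only [PrefProfile.Prefers, extProfile5, not_lt]
  exact le_trans (rank_le_sup hc) (Nat.le_succ _)

lemma prefers_inl_inr {P : PrefProfile A} {a b : A} {c : {a // a ∈ A2set P2}}
    (hb : b ∈ P.acc a) :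
    (extProfile5 P2 P).Prefers (Sum.inl a) (Sum.inl b) (Sum.inr c) := by
  simp only [PrefProfile.Prefers, extProfile5]
  exact Nat.lt_succ_of_le (rank_le_sup hb)

lemma not_prefers_inr_inr {P : PrefProfile A} {a : A} {b c : {a // a ∈ A2set P2}} :
    ¬ (extProfile5 P2 P).Prefers (Sum.inl a) (Sum.inr b) (Sum.inr c) := by
  simp [PrefProfile.Prefers, extProfile5]

lemma not_prefers_inr_base {P : PrefProfile A} {b : {a // a ∈ A2set P2}}
    {y z : A ⊕ {a // a ∈ A2set P2}} :
    ¬ (extProfile5 P2 P).Prefers (Sum.inr b) y z := by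
  cases y <;> cases z <;> simp [PrefProfile.Prefers, extProfile5]

lemma mem_image_inl {M : Finset (Sym2 A)} {x y : A ⊕ {a // a ∈ A2set P2}} :
    s(x, y) ∈ M.image (Sym2.map Sum.inl) ↔
      ∃ a b : A, x = Sum.inl a ∧ y = Sum.inl b ∧ s(a, b) ∈ M := by
  constructor
  · intro h
    obtain ⟨p, hp, hmap⟩ := Finset.mem_image.mp h
    induction p using Sym2.ind with
    | _ a b =>
      rw [Sym2.map_pair_eq, Sym2.eq_iff] at hmap
      rcases hmap with ⟨rfl, rfl⟩ | ⟨rfl, rfl⟩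
      · exact ⟨a, b, rfl, rfl, hp⟩
      · exact ⟨b, a, rfl, rfl, mem_swap'_s5 hp⟩
  · rintro ⟨a, b, rfl, rfl, h⟩
    rw [← Sym2.map_pair_eq]
    exact Finset.mem_image_of_mem _ h

lemma mem_extM5_inl_inl {M1 : Finset (Sym2 A)} {a b : A} :
    s(Sum.inl a, Sum.inl b) ∈ extM5 P2 M1 ↔ s(a, b) ∈ M1 := by
  simp only [extM5, Finset.mem_union]
  constructor
  · rintro (h | h)
    · obtain ⟨a', b', ha, hb, h⟩ := mem_image_inl.mp h
      rwa [Sum.inl.inj ha, Sum.inl.inj hb]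
    · obtain ⟨c, _, hc⟩ := Finset.mem_image.mp h
      rw [Sym2.eq_iff] at hc
      rcases hc with ⟨h1, h2⟩ | ⟨h1, h2⟩ <;> simp_all
  · intro h
    exact Or.inl (mem_image_inl.mpr ⟨a, b, rfl, rfl, h⟩)

lemma mem_extM5_inl_inr {M1 : Finset (Sym2 A)} {a : A} {b : {a // a ∈ A2set P2}} :
    s(Sum.inl a, Sum.inr b) ∈ extM5 P2 M1 ↔ a = b.1 ∧ a ∈ A1set M1 := by
  simp only [extM5, Finset.mem_union]
  constructor
  · rintro (h | h)
    · obtain ⟨a', b', _, hb, _⟩ := mem_image_inl.mp h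
      simp at hb
    · obtain ⟨c, hc, hceq⟩ := Finset.mem_image.mp h
      rw [Sym2.eq_iff] at hceq
      rcases hceq with ⟨h1, h2⟩ | ⟨h1, h2⟩
      · refine ⟨?_, ?_⟩
        · rw [← Sum.inl.inj h1]
          exact congrArg Subtype.val (Sum.inr.inj h2)
        · rw [← Sum.inl.inj h1]
          exact (Finset.mem_inter.mp c.2).1
      · simp at h1
  · rintro ⟨heq, hA1⟩
    subst heq
    refine Or.inr (Finset.mem_image.mpr ⟨⟨b.1, Finset.mem_inter.mpr ⟨hA1, b.2⟩⟩,
      Finset.mem_attach _ _, ?_⟩)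
    simp
lemma mem_extM5_inr_inr {M1 : Finset (Sym2 A)} {b c : {a // a ∈ A2set P2}} :
    s(Sum.inr b, Sum.inr c) ∉ extM5 P2 M1 := by
  simp only [extM5, Finset.mem_union]
  rintro (h | h)
  · obtain ⟨a', b', ha, _, _⟩ := mem_image_inl.mp h
    simp at ha
  · obtain ⟨d, _, hd⟩ := Finset.mem_image.mp h
    rw [Sym2.eq_iff] at hd
    rcases hd with ⟨h1, h2⟩ | ⟨h1, h2⟩ <;> simp_all

/-- The full extension: `M` together with `{a, a'}` for every `a ∈ A2`. -/
def extFull (P2 : PrefProfile A) (M : Finset (Sym2 A)) :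
    Finset (Sym2 (A ⊕ {a : A // a ∈ A2set P2})) :=
  M.image (Sym2.map Sum.inl) ∪ (A2set P2).attach.image fun a => s(Sum.inl a.1, Sum.inr a)

lemma mem_extFull_inl_inl {M : Finset (Sym2 A)} {a b : A} :
    s(Sum.inl a, Sum.inl b) ∈ extFull P2 M ↔ s(a, b) ∈ M := by
  simp only [extFull, Finset.mem_union]
  constructor
  · rintro (h | h)
    · obtain ⟨a', b', ha, hb, h⟩ := mem_image_inl.mp h
      rwa [Sum.inl.inj ha, Sum.inl.inj hb]
    · obtain ⟨c, _, hc⟩ := Finset.mem_image.mp h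
      rw [Sym2.eq_iff] at hc
      rcases hc with ⟨h1, h2⟩ | ⟨h1, h2⟩ <;> simp_all
  · intro h
    exact Or.inl (mem_image_inl.mpr ⟨a, b, rfl, rfl, h⟩)

lemma mem_extFull_inl_inr {M : Finset (Sym2 A)} {a : A} {b : {a // a ∈ A2set P2}} :
    s(Sum.inl a, Sum.inr b) ∈ extFull P2 M ↔ a = b.1 := by
  simp only [extFull, Finset.mem_union]
  constructor
  · rintro (h | h)
    · obtain ⟨a', b', _, hb, _⟩ := mem_image_inl.mp h
      simp at hb
    · obtain ⟨c, _, hceq⟩ := Finset.mem_image.mp h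
      rw [Sym2.eq_iff] at hceq
      rcases hceq with ⟨h1, h2⟩ | ⟨h1, h2⟩
      · obtain rfl := Sum.inr.inj h2
        exact (Sum.inl.inj h1).symm
      · simp at h1
  · rintro rfl
    exact Or.inr (Finset.mem_image.mpr ⟨b, Finset.mem_attach _ _, rfl⟩)

lemma mem_extFull_inr_inr {M : Finset (Sym2 A)} {b c : {a // a ∈ A2set P2}} :
    s(Sum.inr b, Sum.inr c) ∉ extFull P2 M := by
  simp only [extFull, Finset.mem_union]
  rintro (h | h)
  · obtain ⟨a', b', ha, _, _⟩ := mem_image_inl.mp h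
    simp at ha
  · obtain ⟨d, _, hd⟩ := Finset.mem_image.mp h
    rw [Sym2.eq_iff] at hd
    rcases hd with ⟨h1, h2⟩ | ⟨h1, h2⟩ <;> simp_all

end Ext
section Ext2
set_option linter.unusedSectionVars false
variable {A : Type*} [Fintype A] [DecidableEq A] {P2 : PrefProfile A}

lemma ext_stable_of (P : PrefProfile A) {M : Finset (Sym2 A)} (hM : IsStable P M)
    {M' : Finset (Sym2 (A ⊕ {a : A // a ∈ A2set P2}))}
    (hll : ∀ a b : A, s(Sum.inl a, Sum.inl b) ∈ M' ↔ s(a, b) ∈ M)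
    (hlr : ∀ (a : A) (b : {a : A // a ∈ A2set P2}), s(Sum.inl a, Sum.inr b) ∈ M' → a = b.1)
    (hrr : ∀ b c : {a : A // a ∈ A2set P2}, s(Sum.inr b, Sum.inr c) ∉ M')
    (hun : ∀ (a : A) (b : {a : A // a ∈ A2set P2}), s(Sum.inl a, Sum.inr b) ∈ M' → ¬ Matched M a)
    (hnm : ∀ b : {a : A // a ∈ A2set P2}, s(Sum.inl b.1, Sum.inr b) ∈ M' ∨ Matched M b.1) :
    IsStable (extProfile5 P2 P) M' := by
  refine ⟨⟨?_, ?_⟩, ?_, ?_⟩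
  · intro p hp
    induction p using Sym2.ind with
    | _ x y =>
      rw [Sym2.mk_isDiag_iff]
      rintro rfl
      cases x with
      | inl a => exact hM.1.1 _ ((hll a a).mp hp) (Sym2.mk_isDiag_iff.mpr rfl)
      | inr b => exact hrr b b hp
  · intro x y z hy hz
    cases x with
    | inl a =>
      cases y with
      | inl b =>
        cases z with
        | inl c => exact congrArg Sum.inl (hM.1.2 a b c ((hll a b).mp hy) ((hll a c).mp hz))
        | inr c => exact absurd ⟨b, (hll a b).mp hy⟩ (hun a c hz)
      | inr b =>
        cases z with
        | inl c => exact absurd ⟨c, (hll a c).mp hz⟩ (hun a b hy)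
        | inr c =>
          exact congrArg Sum.inr (Subtype.ext ((hlr a b hy).symm.trans (hlr a c hz)))
    | inr b =>
      have key : ∀ y, s(Sum.inr b, y) ∈ M' → y = Sum.inl b.1 := by
        intro y hy
        cases y with
        | inl c => exact congrArg Sum.inl (hlr c b (mem_swap'_s5 hy))
        | inr c => exact absurd hy (hrr b c)
      rw [key y hy, key z hz]
  · intro x y hxy
    cases x with
    | inl a =>
      cases y with
      | inl b => exact acc_inl_inl.mpr (hM.2.1 a b ((hll a b).mp hxy))
      | inr b => exact acc_inl_inr.mpr (hlr a b hxy)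
    | inr b =>
      cases y with
      | inl c => exact acc_inr.mpr (congrArg Sum.inl (hlr c b (mem_swap'_s5 hxy)))
      | inr c => exact absurd hxy (hrr b c)
  · rintro x y ⟨hacc1, hacc2, h3, h4⟩
    cases x with
    | inl a =>
      cases y with
      | inl b =>
        refine hM.2.2 a b ⟨acc_inl_inl.mp hacc1, acc_inl_inl.mp hacc2, ?_, ?_⟩
        · intro c hc; exact prefers_inl_inl.mp (h3 (Sum.inl c) ((hll a c).mpr hc))
        · intro c hc; exact prefers_inl_inl.mp (h4 (Sum.inl c) ((hll b c).mpr hc))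
      | inr b =>
        have heq : a = b.1 := acc_inl_inr.mp hacc1
        subst heq
        rcases hnm b with hp | ⟨d, hd⟩
        · exact not_prefers_inr_inr (h3 (Sum.inr b) hp)
        · exact not_prefers_inr_left (hM.2.1 _ _ hd) (h3 (Sum.inl d) ((hll _ d).mpr hd))
    | inr b =>
      obtain rfl := acc_inr.mp hacc1
      rcases hnm b with hp | ⟨d, hd⟩
      · exact not_prefers_inr_base (h3 (Sum.inl b.1) (mem_swap'_s5 hp))
      · exact not_prefers_inr_left (hM.2.1 _ _ hd) (h4 (Sum.inl d) ((hll _ d).mpr hd))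

lemma extM5_stable (P : PrefProfile A) {M1 : Finset (Sym2 A)} (hM1 : IsStable P M1) :
    IsStable (extProfile5 P2 P) (extM5 P2 M1) :=
  ext_stable_of P hM1 (fun _ _ => mem_extM5_inl_inl)
    (fun _ _ h => (mem_extM5_inl_inr.mp h).1)
    (fun _ _ => mem_extM5_inr_inr)
    (fun _ _ h => mem_A1.mp (mem_extM5_inl_inr.mp h).2)
    (fun b => by
      by_cases h : b.1 ∈ A1set M1
      · exact Or.inl (mem_extM5_inl_inr.mpr ⟨rfl, h⟩)
      · exact Or.inr (by rwa [mem_A1, not_not] at h))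

lemma extFull_stable {M2 : Finset (Sym2 A)} (hM2 : IsStable P2 M2) :
    IsStable (extProfile5 P2 P2) (extFull P2 M2) :=
  ext_stable_of P2 hM2 (fun _ _ => mem_extFull_inl_inl)
    (fun _ _ h => mem_extFull_inl_inr.mp h)
    (fun _ _ => mem_extFull_inr_inr)
    (fun a b h => by obtain rfl := mem_extFull_inl_inr.mp h; exact A2_unmatched b.2 hM2)
    (fun b => Or.inl (mem_extFull_inl_inr.mpr rfl))

lemma extFull_perfect (hs2 : P2.Strict) {M2 : Finset (Sym2 A)} (hM2 : IsStable P2 M2) :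
    IsPerfect (extFull P2 M2) := by
  intro x
  cases x with
  | inl a =>
    by_cases h : a ∈ A2set P2
    · exact ⟨Sum.inr ⟨a, h⟩, mem_extFull_inl_inr.mpr rfl⟩
    · obtain ⟨b, hb⟩ := not_A2_matched h hs2 hM2
      exact ⟨Sum.inl b, mem_extFull_inl_inl.mpr hb⟩
  | inr b => exact ⟨Sum.inl b.1, mem_swap'_s5 (mem_extFull_inl_inr.mpr rfl)⟩

/-- Pulling back a matching on the extended agent set to `A`. -/
def pull (P2 : PrefProfile A) (M' : Finset (Sym2 (A ⊕ {a : A // a ∈ A2set P2}))) :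
    Finset (Sym2 A) :=
  Finset.univ.filter fun p => Sym2.map Sum.inl p ∈ M'

lemma mem_pull {M' : Finset (Sym2 (A ⊕ {a : A // a ∈ A2set P2}))} {a b : A} :
    s(a, b) ∈ pull P2 M' ↔ s(Sum.inl a, Sum.inl b) ∈ M' := by
  simp [pull, Sym2.map_pair_eq]

lemma pull_stable {M' : Finset (Sym2 (A ⊕ {a : A // a ∈ A2set P2}))}
    (hM' : IsStable (extProfile5 P2 P2) M') : IsStable P2 (pull P2 M') := by
  refine ⟨⟨?_, ?_⟩, ?_, ?_⟩
  · intro p hp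
    induction p using Sym2.ind with
    | _ a b =>
      rw [Sym2.mk_isDiag_iff]
      rintro rfl
      exact hM'.1.1 _ (mem_pull.mp hp) (Sym2.mk_isDiag_iff.mpr rfl)
  · intro a b c hb hc
    exact Sum.inl.inj (hM'.1.2 (Sum.inl a) (Sum.inl b) (Sum.inl c) (mem_pull.mp hb)
      (mem_pull.mp hc))
  · intro a b h
    exact acc_inl_inl.mp (hM'.2.1 (Sum.inl a) (Sum.inl b) (mem_pull.mp h))
  · rintro a b ⟨h1, h2, h3, h4⟩
    refine hM'.2.2 (Sum.inl a) (Sum.inl b) ⟨acc_inl_inl.mpr h1, acc_inl_inl.mpr h2, ?_, ?_⟩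
    · intro c hc
      cases c with
      | inl d => exact prefers_inl_inl.mpr (h3 d (mem_pull.mpr hc))
      | inr d => exact prefers_inl_inr h1
    · intro c hc
      cases c with
      | inl d => exact prefers_inl_inl.mpr (h4 d (mem_pull.mpr hc))
      | inr d => exact prefers_inl_inr h2

lemma pair_mem_of_stable {M' : Finset (Sym2 (A ⊕ {a : A // a ∈ A2set P2}))}
    (hM' : IsStable (extProfile5 P2 P2) M') (b : {a : A // a ∈ A2set P2}) :
    s(Sum.inl b.1, Sum.inr b) ∈ M' := by
  by_contra hpair
  have hbun : ¬ Matched (pull P2 M') b.1 := A2_unmatched b.2 (pull_stable hM')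
  refine hM'.2.2 (Sum.inl b.1) (Sum.inr b) ⟨acc_inl_inr.mpr rfl, acc_inr.mpr rfl, ?_, ?_⟩
  · intro c hc
    cases c with
    | inl d => exact absurd ⟨d, mem_pull.mpr hc⟩ hbun
    | inr d =>
      have hdb : d = b := Subtype.ext (acc_inl_inr.mp (hM'.2.1 _ _ hc)).symm
      rw [hdb] at hc
      exact absurd hc hpair
  · intro c hc
    have hcb : c = Sum.inl b.1 := acc_inr.mp (hM'.2.1 _ _ hc)
    rw [hcb] at hc
    exact absurd (mem_swap'_s5 hc) hpair

/-- The pairs `{a, a'}` for `a ∈ A2 \ A1`. -/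
def mixedPairs (P2 : PrefProfile A) (M1 : Finset (Sym2 A)) :
    Finset (Sym2 (A ⊕ {a : A // a ∈ A2set P2})) :=
  (A2set P2 \ A1set M1).attach.image fun a =>
    s(Sum.inl a.1, Sum.inr ⟨a.1, (Finset.mem_sdiff.mp a.2).1⟩)

lemma card_mixedPairs {M1 : Finset (Sym2 A)} :
    (mixedPairs P2 M1).card = (A2set P2 \ A1set M1).card := by
  rw [mixedPairs, Finset.card_image_of_injOn, Finset.card_attach]
  intro a _ b _ h
  rw [Sym2.eq_iff] at h
  rcases h with ⟨h1, h2⟩ | ⟨h1, h2⟩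
  · exact Subtype.ext (Sum.inl.inj h1)
  · simp at h1

lemma mem_mixedPairs {M1 : Finset (Sym2 A)} {p : Sym2 (A ⊕ {a : A // a ∈ A2set P2})} :
    p ∈ mixedPairs P2 M1 ↔
      ∃ b : {a : A // a ∈ A2set P2}, b.1 ∉ A1set M1 ∧ p = s(Sum.inl b.1, Sum.inr b) := by
  constructor
  · intro h
    obtain ⟨c, _, rfl⟩ := Finset.mem_image.mp h
    exact ⟨⟨c.1, (Finset.mem_sdiff.mp c.2).1⟩, (Finset.mem_sdiff.mp c.2).2, rfl⟩
  · rintro ⟨b, hb, rfl⟩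
    refine Finset.mem_image.mpr ⟨⟨b.1, Finset.mem_sdiff.mpr ⟨b.2, hb⟩⟩, Finset.mem_attach _ _, ?_⟩
    simp

lemma disj_image_mixed (S M1 : Finset (Sym2 A)) :
    Disjoint (S.image (Sym2.map Sum.inl)) (mixedPairs P2 M1) := by
  rw [Finset.disjoint_left]
  intro p hp hq
  obtain ⟨b, _, rfl⟩ := mem_mixedPairs.mp hq
  obtain ⟨a', b', _, hb, _⟩ := mem_image_inl.mp hp
  simp at hb

lemma symmDiff_forward (M1 M2 : Finset (Sym2 A)) :
    symmDiff (extM5 P2 M1) (extFull P2 M2) ⊆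
      (symmDiff M1 M2).image (Sym2.map Sum.inl) ∪ mixedPairs P2 M1 := by
  intro p hp
  rw [Finset.mem_symmDiff] at hp
  induction p using Sym2.ind with
  | _ x y =>
    rw [Finset.mem_union]
    have main : ∀ (a : A) (b : {a : A // a ∈ A2set P2}),
        (s(Sum.inl a, Sum.inr b) ∈ extM5 P2 M1 ∧ s(Sum.inl a, Sum.inr b) ∉ extFull P2 M2) ∨
        (s(Sum.inl a, Sum.inr b) ∈ extFull P2 M2 ∧ s(Sum.inl a, Sum.inr b) ∉ extM5 P2 M1) →
        s(Sum.inl a, Sum.inr b) ∈ mixedPairs P2 M1 := by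
      rintro a b (⟨h1, h2⟩ | ⟨h1, h2⟩)
      · obtain ⟨heq, hA1⟩ := mem_extM5_inl_inr.mp h1
        exact absurd (mem_extFull_inl_inr.mpr heq) h2
      · have heq := mem_extFull_inl_inr.mp h1
        subst heq
        exact mem_mixedPairs.mpr ⟨b, fun hA1 => h2 (mem_extM5_inl_inr.mpr ⟨rfl, hA1⟩), rfl⟩
    cases x with
    | inl a =>
      cases y with
      | inl b =>
        left
        refine mem_image_inl.mpr ⟨a, b, rfl, rfl, ?_⟩
        rw [Finset.mem_symmDiff]
        rcases hp with ⟨h1, h2⟩ | ⟨h1, h2⟩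
        · exact Or.inl ⟨mem_extM5_inl_inl.mp h1, fun hh => h2 (mem_extFull_inl_inl.mpr hh)⟩
        · exact Or.inr ⟨mem_extFull_inl_inl.mp h1, fun hh => h2 (mem_extM5_inl_inl.mpr hh)⟩
      | inr b =>
        exact Or.inr (main a b hp)
    | inr b =>
      cases y with
      | inl a =>
        right
        have hp' : (s(Sum.inl a, Sum.inr b) ∈ extM5 P2 M1 ∧
              s(Sum.inl a, Sum.inr b) ∉ extFull P2 M2) ∨
            (s(Sum.inl a, Sum.inr b) ∈ extFull P2 M2 ∧
              s(Sum.inl a, Sum.inr b) ∉ extM5 P2 M1) := by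
          rcases hp with ⟨h1, h2⟩ | ⟨h1, h2⟩
          · exact Or.inl ⟨mem_swap'_s5 h1, fun h => h2 (mem_swap'_s5 h)⟩
          · exact Or.inr ⟨mem_swap'_s5 h1, fun h => h2 (mem_swap'_s5 h)⟩
        exact mem_swap'_s5 (main a b hp')
      | inr c =>
        rcases hp with ⟨h1, _⟩ | ⟨h1, _⟩
        · exact absurd h1 mem_extM5_inr_inr
        · exact absurd h1 mem_extFull_inr_inr

lemma symmDiff_backward {M' : Finset (Sym2 (A ⊕ {a : A // a ∈ A2set P2}))}
    (hM' : IsStable (extProfile5 P2 P2) M') (M1 : Finset (Sym2 A)) :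
    (symmDiff M1 (pull P2 M')).image (Sym2.map Sum.inl) ∪ mixedPairs P2 M1 ⊆
      symmDiff (extM5 P2 M1) M' := by
  intro p hp
  rw [Finset.mem_union] at hp
  rw [Finset.mem_symmDiff]
  rcases hp with hp | hp
  · obtain ⟨q, hq, rfl⟩ := Finset.mem_image.mp hp
    induction q using Sym2.ind with
    | _ a b =>
      rw [Sym2.map_pair_eq]
      rw [Finset.mem_symmDiff] at hq
      rcases hq with ⟨h1, h2⟩ | ⟨h1, h2⟩
      · exact Or.inl ⟨mem_extM5_inl_inl.mpr h1, fun hh => h2 (mem_pull.mpr hh)⟩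
      · exact Or.inr ⟨mem_pull.mp h1, fun hh => h2 (mem_extM5_inl_inl.mp hh)⟩
  · obtain ⟨b, hb, rfl⟩ := mem_mixedPairs.mp hp
    exact Or.inr ⟨pair_mem_of_stable hM' b, fun hh => hb (mem_extM5_inl_inr.mp hh).2⟩

end Ext2

set_option linter.unusedSectionVars false in
/-- Reducing an ISR instance to one where the second profile admits a perfect stable
matching: (a) `M1'` is stable in `P1'`; (b) `P2'` admits a perfect stable matching;
(c) there is a stable matching for `P2` within symmetric difference `k` of `M1` iff
there is a stable matching for `P2'` within symmetric difference `k + |A2 ∖ A1|` of `M1'`. -/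
theorem stmt5 (P1 P2 : PrefProfile A)
    (hl1 : P1.Lawful) (hl2 : P2.Lawful) (hs1 : P1.Strict) (hs2 : P2.Strict)
    (M1 : Finset (Sym2 A)) (hM1 : IsStable P1 M1) (k : ℕ)
    (hex : ∃ M : Finset (Sym2 A), IsStable P2 M) :
    IsStable (extProfile5 P2 P1) (extM5 P2 M1) ∧
    (∃ M, IsStable (extProfile5 P2 P2) M ∧ IsPerfect M) ∧
    ((∃ M2, IsStable P2 M2 ∧ (symmDiff M1 M2).card ≤ k) ↔
     (∃ M2', IsStable (extProfile5 P2 P2) M2' ∧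
        (symmDiff (extM5 P2 M1) M2').card ≤ k + (A2set P2 \ A1set M1).card)) := by
  refine ⟨extM5_stable P1 hM1, ?_, ?_⟩
  · obtain ⟨M, hM⟩ := hex
    exact ⟨extFull P2 M, extFull_stable hM, extFull_perfect hs2 hM⟩
  constructor
  · rintro ⟨M2, hM2, hcard⟩
    refine ⟨extFull P2 M2, extFull_stable hM2, ?_⟩
    calc (symmDiff (extM5 P2 M1) (extFull P2 M2)).card
        ≤ ((symmDiff M1 M2).image (Sym2.map Sum.inl) ∪ mixedPairs P2 M1).card :=
          Finset.card_le_card (symmDiff_forward M1 M2)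
      _ ≤ ((symmDiff M1 M2).image (Sym2.map Sum.inl)).card + (mixedPairs P2 M1).card :=
          Finset.card_union_le _ _
      _ ≤ (symmDiff M1 M2).card + (A2set P2 \ A1set M1).card := by
          rw [card_mixedPairs]
          exact Nat.add_le_add_right Finset.card_image_le _
      _ ≤ k + (A2set P2 \ A1set M1).card := Nat.add_le_add_right hcard _
  · rintro ⟨M2', hM2', hcard⟩
    refine ⟨pull P2 M2', pull_stable hM2', ?_⟩
    have h1 := Finset.card_le_card (symmDiff_backward hM2' M1)
    rw [Finset.card_union_of_disjoint (disj_image_mixed _ _),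
      Finset.card_image_of_injective _ (Sym2.map.injective Sum.inl_injective),
      card_mixedPairs] at h1
    omega
end
end
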